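/- arXiv:1602.04505 — 2 statements merged into one kernel-verified Lean document; each statement's English description precedes it below -/
import Mathlib

section
/- Let G be a 3-connected finite simple graph, 𝒯 a G-tangle of order 4, and let e = s₁s₂ be the crossedge of two crossing non-degenerate separations (Y₁,S₁,Z₁), (Y₂,S₂,Z₂) ∈ 𝒯_min, with s₁ ∈ S₁ and s₂ ∈ S₂. Let G' be the graph obtained from G by contracting e onto s₁, i.e., V(G') = V(G) ∖ {s₂}, and distinct u,v ∈ V(G') are adjacent in G' iff uv is an edge of G, or u = s₁ and vs₂ is an edge of G, or v = s₁ and us₂ is an edge of G. Then G' is 3-connected. -/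
variable {V : Type*} {W : Type*}

/-- A separation (Y,S,Z) of a graph: pairwise disjoint sets covering the vertex set,
with no edge between Y and Z. -/
def IsSeparation (G : SimpleGraph V) (Y S Z : Set V) : Prop :=
  Disjoint Y S ∧ Disjoint Y Z ∧ Disjoint S Z ∧ Y ∪ S ∪ Z = Set.univ ∧
    ∀ y ∈ Y, ∀ z ∈ Z, ¬ G.Adj y z

/-- `G` is `k`-connected: more than `k` vertices and no proper separation of order `< k`. -/
def KConnected (k : ℕ) (G : SimpleGraph V) : Prop :=
  k < Nat.card V ∧
    ∀ Y S Z : Set V, IsSeparation G Y S Z → Y.Nonempty → Z.Nonempty → k ≤ S.ncard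

/-- `G` is quasi-4-connected. -/
def Quasi4Connected (G : SimpleGraph V) : Prop :=
  KConnected 3 G ∧
    ∀ Y S Z : Set V, IsSeparation G Y S Z → S.ncard = 3 → Y.ncard ≤ 1 ∨ Z.ncard ≤ 1

/-- `T` is a `G`-tangle of order `k`. -/
def IsTangle (G : SimpleGraph V) (k : ℕ) (T : Set (Set V × Set V × Set V)) : Prop :=
  (∀ p ∈ T, IsSeparation G p.1 p.2.1 p.2.2 ∧ p.2.1.ncard < k) ∧
  (∀ Y S Z : Set V, IsSeparation G Y S Z → S.ncard < k →
    (Y, S, Z) ∈ T ∨ (Z, S, Y) ∈ T) ∧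
  (∀ p₁ ∈ T, ∀ p₂ ∈ T, ∀ p₃ ∈ T,
    (p₁.2.2 ∩ p₂.2.2 ∩ p₃.2.2 : Set V).Nonempty ∨
      ∃ u v : V, G.Adj u v ∧ (u ∈ p₁.2.2 ∨ v ∈ p₁.2.2) ∧
        (u ∈ p₂.2.2 ∨ v ∈ p₂.2.2) ∧ (u ∈ p₃.2.2 ∨ v ∈ p₃.2.2)) ∧
  (∀ p ∈ T, (p.2.2 : Set V).Nonempty)

/-- The order `⪯` on separations: (Y,S,Z) ⪯ (Y',S',Z') iff S ∪ Z ⊊ S' ∪ Z', or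
S ∪ Z = S' ∪ Z' and S ⊆ S'. -/
def SepLE (p q : Set V × Set V × Set V) : Prop :=
  p.2.1 ∪ p.2.2 ⊂ q.2.1 ∪ q.2.2 ∨
    (p.2.1 ∪ p.2.2 = q.2.1 ∪ q.2.2 ∧ p.2.1 ⊆ q.2.1)

/-- `p` is a `⪯`-minimal element of `T`. -/
def IsMinimalIn (T : Set (Set V × Set V × Set V)) (p : Set V × Set V × Set V) : Prop :=
  p ∈ T ∧ ∀ q ∈ T, SepLE q p → q = p

/-- Two separations are orthogonal. (They cross if they are not orthogonal.) -/
def SepOrthogonal (p q : Set V × Set V × Set V) : Prop :=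
  (p.1 ∪ p.2.1) ∩ (q.1 ∪ q.2.1) ⊆ p.2.1 ∩ q.2.1

/-- A separation (Y,S,Z) is degenerate: |Y| = 1 and S is an independent set. -/
def Degenerate (G : SimpleGraph V) (Y S Z : Set V) : Prop :=
  Y.ncard = 1 ∧ ∀ u ∈ S, ∀ v ∈ S, ¬ G.Adj u v

/-- The neighbourhood N(X): vertices outside X adjacent to a vertex of X. -/
def Nbhd (G : SimpleGraph V) (X : Set V) : Set V :=
  {v | v ∉ X ∧ ∃ u ∈ X, G.Adj u v}

/-- `C` is (the vertex set of) a connected component of `G − X`. -/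
def IsCompOutside (G : SimpleGraph V) (X C : Set V) : Prop :=
  C ⊆ Xᶜ ∧ (G.induce C).Connected ∧ ∀ u ∈ C, ∀ v : V, v ∉ X → G.Adj u v → v ∈ C

/-- The torso `G⟦X⟧` of `X` in `G`. -/
def torso (G : SimpleGraph V) (X : Set V) : SimpleGraph X where
  Adj u v := u ≠ v ∧ (G.Adj (u : V) (v : V) ∨
    ∃ C : Set V, IsCompOutside G X C ∧ (u : V) ∈ Nbhd G C ∧ (v : V) ∈ Nbhd G C)
  symm := by
    constructor
    rintro u v ⟨hne, h | ⟨C, hC, hu, hv⟩⟩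
    · exact ⟨hne.symm, Or.inl h.symm⟩
    · exact ⟨hne.symm, Or.inr ⟨C, hC, hv, hu⟩⟩
  loopless := by
    constructor
    intro u h
    exact h.1 rfl

/-- `H` is a minor of `G`. -/
def IsMinor (H : SimpleGraph W) (G : SimpleGraph V) : Prop :=
  ∃ M : W → Set V,
    (∀ w : W, (G.induce (M w)).Connected) ∧
    (Pairwise fun w w' : W => Disjoint (M w) (M w')) ∧
    ∀ w w' : W, H.Adj w w' → ∃ u ∈ M w, ∃ v ∈ M w', G.Adj u v

/-- `M` is a faithful model of the graph `H` (with vertex set `X ⊆ V(G)`) in `G`. -/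
def FaithfulModel (G : SimpleGraph V) (X : Set V) (H : SimpleGraph X)
    (M : X → Set V) : Prop :=
  (∀ w : X, (w : V) ∈ M w) ∧
  (∀ w : X, (G.induce (M w)).Connected) ∧
  (Pairwise fun w w' : X => Disjoint (M w) (M w')) ∧
  ∀ w w' : X, H.Adj w w' → ∃ u ∈ M w, ∃ v ∈ M w', G.Adj u v

/-- `H` (a graph with vertex set `X ⊆ V(G)`) is a faithful minor of `G`. -/
def IsFaithfulMinor (G : SimpleGraph V) (X : Set V) (H : SimpleGraph X) : Prop :=
  ∃ M : X → Set V, FaithfulModel G X H M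

/-- The projection of a separation of `G` to a minor with model `M`. -/
def projSep {X : Set V} (M : X → Set V) (p : Set V × Set V × Set V) :
    Set X × Set X × Set X :=
  ({w : X | M w ⊆ p.1}, {w : X | (M w ∩ p.2.1).Nonempty}, {w : X | M w ⊆ p.2.2})

/-- The graph TH₊₃: vertices 0,1,2,3 are v₁,v₂,v₃,v₄ (pairwise adjacent); 4,5,6 are
w₁,w₂,w₃ with w₁ ~ v₁,v₂,v₃, w₂ ~ v₁,v₂,v₄, w₃ ~ v₁,v₃,v₄. -/
def TH3 : SimpleGraph (Fin 7) :=
  SimpleGraph.fromRel (fun u v =>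
    (u.val < 4 ∧ v.val < 4) ∨
    (u.val = 4 ∧ (v.val = 0 ∨ v.val = 1 ∨ v.val = 2)) ∨
    (u.val = 5 ∧ (v.val = 0 ∨ v.val = 1 ∨ v.val = 3)) ∨
    (u.val = 6 ∧ (v.val = 0 ∨ v.val = 2 ∨ v.val = 3)))

/-- The graph TR₊₃: vertices 0,1,2 are v₁,v₂,v₃ (pairwise adjacent); 3,4,5 are
w₁,w₂,w₃, each adjacent to each of v₁,v₂,v₃. -/
def TR3 : SimpleGraph (Fin 6) :=
  SimpleGraph.fromRel (fun u v =>
    (u.val < 3 ∧ v.val < 3) ∨ (3 ≤ u.val ∧ v.val < 3))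

/-- A graph is exceptional if it embeds (injectively, preserving adjacency)
into TH₊₃ or into TR₊₃. -/
def Exceptional (H : SimpleGraph W) : Prop :=
  (∃ f : W → Fin 7, Function.Injective f ∧ ∀ u v : W, H.Adj u v → TH3.Adj (f u) (f v)) ∨
  (∃ f : W → Fin 6, Function.Injective f ∧ ∀ u v : W, H.Adj u v → TR3.Adj (f u) (f v))

/-- `X` is a `k`-inseparable set of `G`. -/
def KInseparable (G : SimpleGraph V) (k : ℕ) (X : Set V) : Prop :=
  k < X.ncard ∧
    ¬ ∃ Y S Z : Set V, IsSeparation G Y S Z ∧ S.ncard ≤ k ∧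
      (X ∩ Y).Nonempty ∧ (X ∩ Z).Nonempty

/-- A triconnected region: a maximal 2-inseparable set of size ≥ 4. -/
def TriconnectedRegion (G : SimpleGraph V) (R : Set V) : Prop :=
  KInseparable G 2 R ∧ 4 ≤ R.ncard ∧ ∀ R' : Set V, R ⊂ R' → ¬ KInseparable G 2 R'

/-- `H` is a topological subgraph of `G`. -/
def IsTopologicalSubgraph (H : SimpleGraph W) (G : SimpleGraph V) : Prop :=
  ∃ (φ : W → V) (P : ∀ u v : W, H.Adj u v → G.Walk (φ u) (φ v)),
    Function.Injective φ ∧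
    (∀ u v (h : H.Adj u v), (P u v h).IsPath) ∧
    (∀ u v (h : H.Adj u v), P u v h = (P v u h.symm).reverse) ∧
    (∀ u v (h : H.Adj u v), ∀ x ∈ (P u v h).support,
      x ∈ Set.range φ → x = φ u ∨ x = φ v) ∧
    (∀ u v (h : H.Adj u v), ∀ u' v' (h' : H.Adj u' v'), s(u, v) ≠ s(u', v') →
      ∀ x ∈ (P u v h).support, x ∈ (P u' v' h').support →
        (x = φ u ∨ x = φ v) ∧ (x = φ u' ∨ x = φ v'))

/-- A quasi-4-connected region of a 3-connected graph. -/
def Quasi4Region (G : SimpleGraph V) (R : Set V) : Prop :=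
  IsFaithfulMinor G R (torso G R) ∧ Quasi4Connected (torso G R) ∧
    ∀ C : Set V, IsCompOutside G R C → (Nbhd G C).ncard = 3

/-- A split vertex of a separation (Y₀,S₀,Z₀). -/
def SplitVertex (G : SimpleGraph V) (S₀ Z₀ : Set V) (z : V) : Prop :=
  z ∈ Z₀ ∧ ∀ C : Set V, IsCompOutside G (S₀ ∪ {z}) C → (Nbhd G C).ncard = 3

/-- The graph obtained from `G` by contracting the edge `s₁s₂` onto `s₁`. -/
def contractEdge (G : SimpleGraph V) (s₁ s₂ : V) : SimpleGraph ({s₂}ᶜ : Set V) where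
  Adj u v := u ≠ v ∧ (G.Adj (u : V) (v : V) ∨
    ((u : V) = s₁ ∧ G.Adj (v : V) s₂) ∨ ((v : V) = s₁ ∧ G.Adj (u : V) s₂))
  symm := by
    constructor
    rintro u v ⟨hne, h | h | h⟩
    · exact ⟨hne.symm, Or.inl h.symm⟩
    · exact ⟨hne.symm, Or.inr (Or.inr h)⟩
    · exact ⟨hne.symm, Or.inr (Or.inl h)⟩
  loopless := by
    constructor
    intro u h
    exact h.1 rfl

/-- `s t` are the endvertices of a crossedge of two crossing non-degenerate minimal
separations of the tangle `T`, with `s ∈ S₁` and `t ∈ S₂`. -/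
def IsNondegCrossedge (G : SimpleGraph V) (T : Set (Set V × Set V × Set V))
    (s t : V) : Prop :=
  ∃ p q : Set V × Set V × Set V,
    IsMinimalIn T p ∧ IsMinimalIn T q ∧
    ¬ Degenerate G p.1 p.2.1 p.2.2 ∧ ¬ Degenerate G q.1 q.2.1 q.2.2 ∧
    ¬ SepOrthogonal p q ∧ G.Adj s t ∧ p.2.1 ∩ q.1 = {s} ∧ q.2.1 ∩ p.1 = {t}


section Statement18Aux

lemma IsSeparation.flip {G : SimpleGraph V} {Y S Z : Set V} (h : IsSeparation G Y S Z) :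
    IsSeparation G Z S Y := by
  obtain ⟨h1, h2, h3, h4, h5⟩ := h
  refine ⟨h3.symm, h2.symm, h1.symm, ?_, fun z hz y hy hadj => h5 y hy z hz hadj.symm⟩
  rw [← h4]; ext x
  simp only [Set.mem_union]; tauto

lemma IsSeparation.cover {G : SimpleGraph V} {Y S Z : Set V} (h : IsSeparation G Y S Z)
    (v : V) : v ∈ Y ∨ v ∈ S ∨ v ∈ Z := by
  have hv : v ∈ Y ∪ S ∪ Z := h.2.2.2.1 ▸ Set.mem_univ v
  simpa [Set.mem_union, or_assoc] using hv

lemma corner_sep {G : SimpleGraph V} {A₁ T₁ B₁ A₂ T₂ B₂ : Set V}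
    (h1 : IsSeparation G A₁ T₁ B₁) (h2 : IsSeparation G A₂ T₂ B₂) :
    IsSeparation G ((T₁ ∩ T₂ ∪ T₁ ∩ B₂ ∪ T₂ ∩ B₁) ∪ B₁ ∩ B₂)ᶜ
      (T₁ ∩ T₂ ∪ T₁ ∩ B₂ ∪ T₂ ∩ B₁) (B₁ ∩ B₂) := by
  refine ⟨?_, ?_, ?_, ?_, ?_⟩
  · exact Set.disjoint_left.mpr fun a ha hN => ha (Or.inl hN)
  · exact Set.disjoint_left.mpr fun a ha hB => ha (Or.inr hB)
  · rw [Set.disjoint_left]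
    rintro a ((⟨hT1, _⟩ | ⟨hT1, _⟩) | ⟨hT2, hB1⟩) ⟨hb1, hb2⟩
    · exact Set.disjoint_left.mp h1.2.2.1 hT1 hb1
    · exact Set.disjoint_left.mp h1.2.2.1 hT1 hb1
    · exact Set.disjoint_left.mp h2.2.2.1 hT2 hb2
  · ext v
    simp only [Set.mem_union, Set.mem_compl_iff, Set.mem_univ, iff_true]
    tauto
  · intro y hy z hz hadj
    simp only [Set.mem_compl_iff, Set.mem_union, not_or] at hy
    obtain ⟨⟨⟨hP, hQ⟩, hR⟩, hyb⟩ := hy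
    obtain ⟨hz1, hz2⟩ := hz
    rcases h1.cover y with hA | hT | hB
    · exact h1.2.2.2.2 y hA z hz1 hadj
    · rcases h2.cover y with hA2 | hT2 | hB2
      · exact h2.2.2.2.2 y hA2 z hz2 hadj
      · exact hP ⟨hT, hT2⟩
      · exact hQ ⟨hT, hB2⟩
    · rcases h2.cover y with hA2 | hT2 | hB2
      · exact h2.2.2.2.2 y hA2 z hz2 hadj
      · exact hR ⟨hT2, hB⟩
      · exact hyb ⟨hB, hB2⟩

lemma corner_in_tangle {G : SimpleGraph V} {T : Set (Set V × Set V × Set V)}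
    (hT : IsTangle G 4 T) {A₁ T₁ B₁ A₂ T₂ B₂ : Set V}
    (hp1 : (A₁, T₁, B₁) ∈ T) (hp2 : (A₂, T₂, B₂) ∈ T)
    (hN : (T₁ ∩ T₂ ∪ T₁ ∩ B₂ ∪ T₂ ∩ B₁).ncard < 4) :
    (((T₁ ∩ T₂ ∪ T₁ ∩ B₂ ∪ T₂ ∩ B₁) ∪ B₁ ∩ B₂)ᶜ,
      T₁ ∩ T₂ ∪ T₁ ∩ B₂ ∪ T₂ ∩ B₁, B₁ ∩ B₂) ∈ T := by
  have h1 := (hT.1 _ hp1).1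
  have h2 := (hT.1 _ hp2).1
  have hsep := corner_sep h1 h2
  rcases hT.2.1 _ _ _ hsep hN with h | h
  · exact h
  exfalso
  have key : ∀ u v : V, G.Adj u v →
      u ∈ ((T₁ ∩ T₂ ∪ T₁ ∩ B₂ ∪ T₂ ∩ B₁) ∪ B₁ ∩ B₂)ᶜ →
      (u ∈ B₁ ∨ v ∈ B₁) → (u ∈ B₂ ∨ v ∈ B₂) → False := by
    intro u v hadj huC h1' h2'
    have huC' : u ∉ (T₁ ∩ T₂ ∪ T₁ ∩ B₂ ∪ T₂ ∩ B₁) ∪ B₁ ∩ B₂ := huC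
    rcases h2' with h2' | h2'
    · rcases h1' with h1' | h1'
      · exact huC' (Or.inr ⟨h1', h2'⟩)
      · rcases h1.cover u with hA | hTT | hB
        · exact h1.2.2.2.2 u hA v h1' hadj
        · exact huC' (Or.inl (Or.inl (Or.inr ⟨hTT, h2'⟩)))
        · exact huC' (Or.inr ⟨hB, h2'⟩)
    · rcases h1' with h1' | h1'
      · rcases h2.cover u with hA | hTT | hB
        · exact h2.2.2.2.2 u hA v h2' hadj
        · exact huC' (Or.inl (Or.inr ⟨hTT, h1'⟩))
        · exact huC' (Or.inr ⟨h1', hB⟩)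
      · exact hsep.2.2.2.2 u huC v ⟨h1', h2'⟩ hadj
  rcases hT.2.2.1 _ hp1 _ hp2 _ h with ⟨x, hx⟩ | ⟨u, v, hadj, hu1, hu2, hu3⟩
  · exact hx.2 (Or.inr hx.1)
  · rcases hu3 with hu | hv
    · exact key u v hadj hu hu1 hu2
    · exact key v u hadj.symm hv hu1.symm hu2.symm

lemma tangle_half [Finite V] {G : SimpleGraph V}
    (h3 : KConnected 3 G) {T : Set (Set V × Set V × Set V)} (hT : IsTangle G 4 T)
    {Y₁ S₁ Z₁ : Set V} {s₁ s₂ : V}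
    (h₁ : IsMinimalIn T (Y₁, S₁, Z₁)) (hs₁S₁ : s₁ ∈ S₁) (hs₂Y₁ : s₂ ∈ Y₁)
    (hne12 : s₁ ≠ s₂)
    {Y S Z : Set V} (hX : (Y, S, Z) ∈ T) (hs₁S : s₁ ∈ S) (hs₂S : s₂ ∈ S)
    (hYne : Y.Nonempty) : Y ⊆ Y₁ := by
  have sep₁ : IsSeparation G Y₁ S₁ Z₁ := (hT.1 _ h₁.1).1
  have ord₁ : S₁.ncard < 4 := (hT.1 _ h₁.1).2
  have sepX : IsSeparation G Y S Z := (hT.1 _ hX).1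
  have ordX : S.ncard < 4 := (hT.1 _ hX).2
  have Z₁ne : Z₁.Nonempty := hT.2.2.2 _ h₁.1
  have Zne : Z.Nonempty := hT.2.2.2 _ hX
  have card₁ : S₁.ncard = 3 := by
    have := h3.2 _ _ _ sep₁ ⟨s₂, hs₂Y₁⟩ Z₁ne
    omega
  have cardS : S.ncard = 3 := by
    have := h3.2 _ _ _ sepX hYne Zne
    omega
  have hs₂nS₁ : s₂ ∉ S₁ := fun h => Set.disjoint_left.mp sep₁.1 hs₂Y₁ h
  have hs₂nZ₁ : s₂ ∉ Z₁ := fun h => Set.disjoint_left.mp sep₁.2.1 hs₂Y₁ h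
  have hs₁nZ : s₁ ∉ Z := fun h => Set.disjoint_left.mp sepX.2.2.1 hs₁S h
  have hs₂nZ : s₂ ∉ Z := fun h => Set.disjoint_left.mp sepX.2.2.1 hs₂S h
  have hs₁nZ₁ : s₁ ∉ Z₁ := fun h => Set.disjoint_left.mp sep₁.2.2.1 hs₁S₁ h
  by_cases hbad : S ∩ Y₁ = {s₂} ∧ S₁ \ {s₁} ⊆ Z
  · exfalso
    obtain ⟨hSY₁, hS₁Z⟩ := hbad
    have eSS₁ : S ∩ S₁ = {s₁} := by
      apply Set.eq_singleton_iff_unique_mem.mpr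
      refine ⟨⟨hs₁S, hs₁S₁⟩, ?_⟩
      rintro x ⟨hxS, hxS₁⟩
      by_contra hne
      exact Set.disjoint_left.mp sepX.2.2.1 hxS (hS₁Z ⟨hxS₁, hne⟩)
    have eS₁Y : S₁ ∩ Y = ∅ := by
      ext x
      simp only [Set.mem_inter_iff, Set.mem_empty_iff_false, iff_false, not_and]
      intro hxS₁ hxY
      by_cases hx : x = s₁
      · subst hx; exact Set.disjoint_left.mp sepX.1 hxY hs₁S
      · exact Set.disjoint_left.mp sepX.2.1 hxY (hS₁Z ⟨hxS₁, hx⟩)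
    -- first corner: towards Y ∩ Y₁, separator {s₁, s₂}
    have hMY : S ∩ S₁ ∪ S ∩ Y₁ ∪ S₁ ∩ Y = {s₁, s₂} := by
      rw [eSS₁, hSY₁, eS₁Y, Set.union_empty, Set.singleton_union]
    have hsepYY := corner_sep sepX.flip sep₁.flip
    rw [hMY] at hsepYY
    have hYY : Y ∩ Y₁ = ∅ := by
      by_contra hne
      obtain ⟨w, hw⟩ := Set.nonempty_iff_ne_empty.mpr hne
      obtain ⟨z, hz⟩ := Zne
      have hzC : z ∈ (({s₁, s₂} : Set V) ∪ Y ∩ Y₁)ᶜ := by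
        intro hmem
        rcases hmem with hz' | hz'
        · simp only [Set.mem_insert_iff, Set.mem_singleton_iff] at hz'
          rcases hz' with rfl | rfl
          · exact hs₁nZ hz
          · exact hs₂nZ hz
        · exact Set.disjoint_left.mp sepX.2.1 hz'.1 hz
      have := h3.2 _ _ _ hsepYY ⟨z, hzC⟩ ⟨w, hw⟩
      rw [Set.ncard_pair hne12] at this
      omega
    have hYZ₁ : Y ⊆ Z₁ := by
      intro y hy
      rcases sep₁.cover y with h | h | h
      · exact absurd (show y ∈ Y ∩ Y₁ from ⟨hy, h⟩) (by rw [hYY]; exact Set.notMem_empty y)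
      · exact absurd (show y ∈ S₁ ∩ Y from ⟨h, hy⟩) (by rw [eS₁Y]; exact Set.notMem_empty y)
      · exact h
    -- second corner: towards Y ∩ Z₁, separator of size ≤ 2
    have hsepYZ := corner_sep sepX.flip sep₁
    obtain ⟨y, hy⟩ := hYne
    have hyB : y ∈ Y ∩ Z₁ := ⟨hy, hYZ₁ hy⟩
    have hs₂C : s₂ ∈ ((S ∩ S₁ ∪ S ∩ Z₁ ∪ S₁ ∩ Y) ∪ Y ∩ Z₁)ᶜ := by
      rintro ((( ⟨_, h⟩ | ⟨_, h⟩) | ⟨h, _⟩) | ⟨_, h⟩)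
      · exact hs₂nS₁ h
      · exact hs₂nZ₁ h
      · exact hs₂nS₁ h
      · exact hs₂nZ₁ h
    have hord := h3.2 _ _ _ hsepYZ ⟨s₂, hs₂C⟩ ⟨y, hyB⟩
    have h1' : (S ∩ Z₁).ncard ≤ 1 := by
      have hsub : S ∩ Z₁ ⊆ (S \ {s₂}) \ {s₁} := by
        rintro x ⟨hxS, hxZ₁⟩
        refine ⟨⟨hxS, ?_⟩, ?_⟩
        · simp only [Set.mem_singleton_iff]
          rintro rfl; exact hs₂nZ₁ hxZ₁
        · simp only [Set.mem_singleton_iff]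
          rintro rfl; exact hs₁nZ₁ hxZ₁
      have hmem : s₁ ∈ S \ {s₂} := ⟨hs₁S, by simp [hne12]⟩
      calc (S ∩ Z₁).ncard ≤ ((S \ {s₂}) \ {s₁}).ncard := Set.ncard_le_ncard hsub (Set.toFinite _)
        _ = 1 := by
          rw [Set.ncard_diff_singleton_of_mem hmem,
            Set.ncard_diff_singleton_of_mem hs₂S, cardS]
    have hMle : (S ∩ S₁ ∪ S ∩ Z₁ ∪ S₁ ∩ Y).ncard ≤ 2 := by
      rw [eSS₁, eS₁Y, Set.union_empty]
      calc ({s₁} ∪ S ∩ Z₁).ncard ≤ ({s₁} : Set V).ncard + (S ∩ Z₁).ncard :=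
            Set.ncard_union_le _ _
        _ ≤ 1 + 1 := by rw [Set.ncard_singleton]; omega
        _ = 2 := rfl
    omega
  · -- good case: the corner towards Z ∩ Z₁ has order < 4
    have hNle : (S ∩ S₁ ∪ S ∩ Z₁ ∪ S₁ ∩ Z).ncard < 4 := by
      have hgen1 : S ∩ S₁ ∪ S ∩ Z₁ ⊆ S \ {s₂} := by
        rintro x (⟨h1, h2⟩ | ⟨h1, h2⟩) <;> refine ⟨h1, ?_⟩ <;>
          simp only [Set.mem_singleton_iff]
        · rintro rfl; exact hs₂nS₁ h2
        · rintro rfl; exact hs₂nZ₁ h2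
      have hcS2 : (S \ {s₂}).ncard = 2 := by
        rw [Set.ncard_diff_singleton_of_mem hs₂S, cardS]
      have hgen2 : S₁ ∩ Z ⊆ S₁ \ {s₁} := by
        rintro x ⟨h1, h2⟩
        refine ⟨h1, ?_⟩
        simp only [Set.mem_singleton_iff]
        rintro rfl; exact hs₁nZ h2
      have hcS1 : (S₁ \ {s₁}).ncard = 2 := by
        rw [Set.ncard_diff_singleton_of_mem hs₁S₁, card₁]
      by_cases hq : S₁ \ {s₁} ⊆ Z
      · have hp : S ∩ Y₁ ≠ {s₂} := fun h => hbad ⟨h, hq⟩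
        have hsing : ({s₂} : Set V) ⊆ S ∩ Y₁ := Set.singleton_subset_iff.mpr ⟨hs₂S, hs₂Y₁⟩
        obtain ⟨t, htm, htn⟩ := Set.exists_of_ssubset (hsing.ssubset_of_ne fun h => hp h.symm)
        simp only [Set.mem_singleton_iff] at htn
        have hsub12 : S ∩ S₁ ∪ S ∩ Z₁ ⊆ (S \ {s₂}) \ {t} := by
          rintro x hx
          refine ⟨hgen1 hx, ?_⟩
          simp only [Set.mem_singleton_iff]
          rintro rfl
          rcases hx with ⟨_, h2⟩ | ⟨_, h2⟩
          · exact Set.disjoint_left.mp sep₁.1 htm.2 h2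
          · exact Set.disjoint_left.mp sep₁.2.1 htm.2 h2
        have htmem : t ∈ S \ {s₂} := ⟨htm.1, htn⟩
        have hc12 : ((S \ {s₂}) \ {t}).ncard = 1 := by
          rw [Set.ncard_diff_singleton_of_mem htmem, hcS2]
        calc (S ∩ S₁ ∪ S ∩ Z₁ ∪ S₁ ∩ Z).ncard
            ≤ (S ∩ S₁ ∪ S ∩ Z₁).ncard + (S₁ ∩ Z).ncard := Set.ncard_union_le _ _
          _ ≤ 1 + 2 := add_le_add
              (hc12 ▸ Set.ncard_le_ncard hsub12 (Set.toFinite _))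
              (hcS1 ▸ Set.ncard_le_ncard hgen2 (Set.toFinite _))
          _ < 4 := by omega
      · obtain ⟨w, hwm, hwn⟩ := Set.not_subset.mp hq
        have hsub3 : S₁ ∩ Z ⊆ (S₁ \ {s₁}) \ {w} := by
          rintro x hx
          refine ⟨hgen2 hx, ?_⟩
          simp only [Set.mem_singleton_iff]
          rintro rfl; exact hwn hx.2
        have hc3 : ((S₁ \ {s₁}) \ {w}).ncard = 1 := by
          rw [Set.ncard_diff_singleton_of_mem hwm, hcS1]
        calc (S ∩ S₁ ∪ S ∩ Z₁ ∪ S₁ ∩ Z).ncard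
            ≤ (S ∩ S₁ ∪ S ∩ Z₁).ncard + (S₁ ∩ Z).ncard := Set.ncard_union_le _ _
          _ ≤ 2 + 1 := add_le_add
              (hcS2 ▸ Set.ncard_le_ncard hgen1 (Set.toFinite _))
              (hc3 ▸ Set.ncard_le_ncard hsub3 (Set.toFinite _))
          _ < 4 := by omega
    have corner := corner_in_tangle hT hX h₁.1 hNle
    have hsub : (S ∩ S₁ ∪ S ∩ Z₁ ∪ S₁ ∩ Z) ∪ Z ∩ Z₁ ⊆ S₁ ∪ Z₁ := by
      rintro x (((⟨h1, h2⟩ | ⟨h1, h2⟩) | ⟨h1, h2⟩) | ⟨h1, h2⟩)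
      exacts [Or.inl h2, Or.inr h2, Or.inl h1, Or.inr h2]
    rcases hsub.ssubset_or_eq with hss | heq
    · have hq := h₁.2 _ corner (Or.inl hss)
      have := congrArg (fun p : Set V × Set V × Set V => p.2.1 ∪ p.2.2) hq
      exact (hss.ne this).elim
    · intro y hy
      have hyn : y ∉ S₁ ∪ Z₁ := by
        rw [← heq]
        rintro (((⟨h1, _⟩ | ⟨h1, _⟩) | ⟨_, h2⟩) | ⟨h1, _⟩)
        · exact Set.disjoint_left.mp sepX.1 hy h1
        · exact Set.disjoint_left.mp sepX.1 hy h1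
        · exact Set.disjoint_left.mp sepX.2.1 hy h2
        · exact Set.disjoint_left.mp sepX.2.1 hy h1
      rcases sep₁.cover y with h | h | h
      · exact h
      · exact (hyn (Or.inl h)).elim
      · exact (hyn (Or.inr h)).elim

lemma SS_empty [Finite V] {G : SimpleGraph V}
    (h3 : KConnected 3 G) {T : Set (Set V × Set V × Set V)} (hT : IsTangle G 4 T)
    {Y₁ S₁ Z₁ Y₂ S₂ Z₂ : Set V} {s₁ s₂ : V}
    (h₁ : IsMinimalIn T (Y₁, S₁, Z₁)) (h₂ : IsMinimalIn T (Y₂, S₂, Z₂))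
    (hs₁ : S₁ ∩ Y₂ = {s₁}) (hs₂ : S₂ ∩ Y₁ = {s₂}) :
    S₁ ∩ S₂ = ∅ := by
  by_contra hne
  obtain ⟨x, hxS₁, hxS₂⟩ := Set.nonempty_iff_ne_empty.mpr hne
  have sep₁ : IsSeparation G Y₁ S₁ Z₁ := (hT.1 _ h₁.1).1
  have ord₁ : S₁.ncard < 4 := (hT.1 _ h₁.1).2
  have sep₂ : IsSeparation G Y₂ S₂ Z₂ := (hT.1 _ h₂.1).1
  have ord₂ : S₂.ncard < 4 := (hT.1 _ h₂.1).2
  have hs₁m : s₁ ∈ S₁ ∩ Y₂ := by rw [hs₁]; rfl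
  have hs₂m : s₂ ∈ S₂ ∩ Y₁ := by rw [hs₂]; rfl
  have Z₁ne : Z₁.Nonempty := hT.2.2.2 _ h₁.1
  have Z₂ne : Z₂.Nonempty := hT.2.2.2 _ h₂.1
  have card₁ : S₁.ncard = 3 := by
    have := h3.2 _ _ _ sep₁ ⟨s₂, hs₂m.2⟩ Z₁ne
    omega
  have card₂ : S₂.ncard = 3 := by
    have := h3.2 _ _ _ sep₂ ⟨s₁, hs₁m.2⟩ Z₂ne
    omega
  have hU : S₁ ∩ S₂ ∪ S₁ ∩ Z₂ ⊆ S₁ \ {s₁} := by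
    rintro y (⟨h1, h2⟩ | ⟨h1, h2⟩) <;> refine ⟨h1, ?_⟩ <;>
      simp only [Set.mem_singleton_iff]
    · rintro rfl; exact Set.disjoint_left.mp sep₂.1 hs₁m.2 h2
    · rintro rfl; exact Set.disjoint_left.mp sep₂.2.1 hs₁m.2 h2
  have hV : S₂ ∩ Z₁ ⊆ (S₂ \ {s₂}) \ {x} := by
    rintro y ⟨h1, h2⟩
    refine ⟨⟨h1, ?_⟩, ?_⟩ <;> simp only [Set.mem_singleton_iff]
    · rintro rfl; exact Set.disjoint_left.mp sep₁.2.1 hs₂m.2 h2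
    · rintro rfl; exact Set.disjoint_left.mp sep₁.2.2.1 hxS₁ h2
  have hcU : (S₁ \ {s₁}).ncard = 2 := by
    rw [Set.ncard_diff_singleton_of_mem hs₁m.1, card₁]
  have hxne : x ≠ s₂ := by
    rintro rfl
    exact Set.disjoint_left.mp sep₁.1 hs₂m.2 hxS₁
  have hcV : ((S₂ \ {s₂}) \ {x}).ncard = 1 := by
    have hmem : x ∈ S₂ \ {s₂} := ⟨hxS₂, by simp [hxne]⟩
    rw [Set.ncard_diff_singleton_of_mem hmem,
      Set.ncard_diff_singleton_of_mem hs₂m.1, card₂]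
  have hNle : (S₁ ∩ S₂ ∪ S₁ ∩ Z₂ ∪ S₂ ∩ Z₁).ncard < 4 := by
    calc (S₁ ∩ S₂ ∪ S₁ ∩ Z₂ ∪ S₂ ∩ Z₁).ncard
        ≤ (S₁ ∩ S₂ ∪ S₁ ∩ Z₂).ncard + (S₂ ∩ Z₁).ncard := Set.ncard_union_le _ _
      _ ≤ 2 + 1 := add_le_add
          (hcU ▸ Set.ncard_le_ncard hU (Set.toFinite _))
          (hcV ▸ Set.ncard_le_ncard hV (Set.toFinite _))
      _ < 4 := by omega
  have corner := corner_in_tangle hT h₁.1 h₂.1 hNle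
  have hsub : (S₁ ∩ S₂ ∪ S₁ ∩ Z₂ ∪ S₂ ∩ Z₁) ∪ Z₁ ∩ Z₂ ⊆ S₁ ∪ Z₁ := by
    rintro y (((⟨h1, _⟩ | ⟨h1, _⟩) | ⟨_, h2⟩) | ⟨h1, _⟩)
    exacts [Or.inl h1, Or.inl h1, Or.inr h2, Or.inr h1]
  have hs₁n : s₁ ∉ (S₁ ∩ S₂ ∪ S₁ ∩ Z₂ ∪ S₂ ∩ Z₁) ∪ Z₁ ∩ Z₂ := by
    rintro (((⟨_, h⟩ | ⟨_, h⟩) | ⟨h, _⟩) | ⟨_, h⟩)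
    · exact Set.disjoint_left.mp sep₂.1 hs₁m.2 h
    · exact Set.disjoint_left.mp sep₂.2.1 hs₁m.2 h
    · exact Set.disjoint_left.mp sep₂.1 hs₁m.2 h
    · exact Set.disjoint_left.mp sep₂.2.1 hs₁m.2 h
  have hss : (S₁ ∩ S₂ ∪ S₁ ∩ Z₂ ∪ S₂ ∩ Z₁) ∪ Z₁ ∩ Z₂ ⊂ S₁ ∪ Z₁ :=
    hsub.ssubset_of_ne fun h => hs₁n (h ▸ Or.inl hs₁m.1)
  have heq := h₁.2 _ corner (Or.inl hss)
  exact hss.ne (congrArg (fun p : Set V × Set V × Set V => p.2.1 ∪ p.2.2) heq)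

lemma YY_empty [Finite V] {G : SimpleGraph V}
    (h3 : KConnected 3 G) {T : Set (Set V × Set V × Set V)} (hT : IsTangle G 4 T)
    {Y₁ S₁ Z₁ Y₂ S₂ Z₂ : Set V} {s₁ s₂ : V}
    (h₁ : IsMinimalIn T (Y₁, S₁, Z₁)) (h₂ : IsMinimalIn T (Y₂, S₂, Z₂))
    (hs₁ : S₁ ∩ Y₂ = {s₁}) (hs₂ : S₂ ∩ Y₁ = {s₂}) (hne12 : s₁ ≠ s₂) :
    Y₁ ∩ Y₂ = ∅ := by
  have hSS := SS_empty h3 hT h₁ h₂ hs₁ hs₂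
  have sep₁ : IsSeparation G Y₁ S₁ Z₁ := (hT.1 _ h₁.1).1
  have sep₂ : IsSeparation G Y₂ S₂ Z₂ := (hT.1 _ h₂.1).1
  have hs₁m : s₁ ∈ S₁ ∩ Y₂ := by rw [hs₁]; rfl
  have hs₂m : s₂ ∈ S₂ ∩ Y₁ := by rw [hs₂]; rfl
  have hsep := corner_sep sep₁.flip sep₂.flip
  have hMeq : S₁ ∩ S₂ ∪ S₁ ∩ Y₂ ∪ S₂ ∩ Y₁ = ({s₁, s₂} : Set V) := by
    rw [hSS, hs₁, hs₂, Set.empty_union, Set.singleton_union]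
  rw [hMeq] at hsep
  by_contra hne
  obtain ⟨w, hw⟩ := Set.nonempty_iff_ne_empty.mpr hne
  obtain ⟨z, hz⟩ : Z₁.Nonempty := hT.2.2.2 _ h₁.1
  have hzC : z ∈ (({s₁, s₂} : Set V) ∪ Y₁ ∩ Y₂)ᶜ := by
    rintro (h | h)
    · simp only [Set.mem_insert_iff, Set.mem_singleton_iff] at h
      rcases h with rfl | rfl
      · exact Set.disjoint_left.mp sep₁.2.2.1 hs₁m.1 hz
      · exact Set.disjoint_left.mp sep₁.2.1 hs₂m.2 hz
    · exact Set.disjoint_left.mp sep₁.2.1 h.1 hz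
  have := h3.2 _ _ _ hsep ⟨z, hzC⟩ ⟨w, hw⟩
  rw [Set.ncard_pair hne12] at this
  omega

lemma main_claim_aux [Finite V] {G : SimpleGraph V}
    (h3 : KConnected 3 G) {T : Set (Set V × Set V × Set V)} (hT : IsTangle G 4 T)
    {Y₁ S₁ Z₁ Y₂ S₂ Z₂ : Set V} {s₁ s₂ : V}
    (h₁ : IsMinimalIn T (Y₁, S₁, Z₁)) (h₂ : IsMinimalIn T (Y₂, S₂, Z₂))
    (he : G.Adj s₁ s₂) (hs₁ : S₁ ∩ Y₂ = {s₁}) (hs₂ : S₂ ∩ Y₁ = {s₂}) :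
    ∀ Y S Z : Set V, (Y, S, Z) ∈ T → s₁ ∈ S → s₂ ∈ S → Y = ∅ := by
  intro Y S Z hX hs₁S hs₂S
  by_contra hne
  have hYne := Set.nonempty_iff_ne_empty.mpr hne
  have hs₁m : s₁ ∈ S₁ ∩ Y₂ := by rw [hs₁]; rfl
  have hs₂m : s₂ ∈ S₂ ∩ Y₁ := by rw [hs₂]; rfl
  have hsub1 : Y ⊆ Y₁ := tangle_half h3 hT h₁ hs₁m.1 hs₂m.2 he.ne hX hs₁S hs₂S hYne
  have hsub2 : Y ⊆ Y₂ := tangle_half h3 hT h₂ hs₂m.1 hs₁m.2 he.ne.symm hX hs₂S hs₁S hYne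
  have hYY := YY_empty h3 hT h₁ h₂ hs₁ hs₂ he.ne
  obtain ⟨y, hy⟩ := hYne
  exact absurd (show y ∈ Y₁ ∩ Y₂ from ⟨hsub1 hy, hsub2 hy⟩) (by rw [hYY]; exact Set.notMem_empty y)

end Statement18Aux

/-- contracting a non-degenerate crossedge of a tangle of order 4 of a
3-connected graph yields a 3-connected graph. -/
theorem statement18 {V : Type*} [Fintype V] (G : SimpleGraph V)
    (h3 : KConnected 3 G) (T : Set (Set V × Set V × Set V)) (hT : IsTangle G 4 T)
    (Y₁ S₁ Z₁ Y₂ S₂ Z₂ : Set V) (s₁ s₂ : V)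
    (h₁ : IsMinimalIn T (Y₁, S₁, Z₁)) (h₂ : IsMinimalIn T (Y₂, S₂, Z₂))
    (hnd₁ : ¬ Degenerate G Y₁ S₁ Z₁) (hnd₂ : ¬ Degenerate G Y₂ S₂ Z₂)
    (hcross : ¬ SepOrthogonal (Y₁, S₁, Z₁) (Y₂, S₂, Z₂))
    (he : G.Adj s₁ s₂) (hs₁ : S₁ ∩ Y₂ = {s₁}) (hs₂ : S₂ ∩ Y₁ = {s₂}) :
    KConnected 3 (contractEdge G s₁ s₂) := by
  have hs₁m : s₁ ∈ S₁ ∩ Y₂ := by rw [hs₁]; rfl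
  have hs₂m : s₂ ∈ S₂ ∩ Y₁ := by rw [hs₂]; rfl
  have sep₁ : IsSeparation G Y₁ S₁ Z₁ := (hT.1 _ h₁.1).1
  have ord₁ : S₁.ncard < 4 := (hT.1 _ h₁.1).2
  have Z₁ne : Z₁.Nonempty := hT.2.2.2 _ h₁.1
  have card₁ : S₁.ncard = 3 := by
    have := h3.2 _ _ _ sep₁ ⟨s₂, hs₂m.2⟩ Z₁ne
    omega
  have hcardV : 5 ≤ Nat.card V := by
    have hd1 : Disjoint (Y₁ ∪ S₁) Z₁ := Set.disjoint_union_left.mpr ⟨sep₁.2.1, sep₁.2.2.1⟩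
    have hsum : (Y₁ ∪ S₁ ∪ Z₁).ncard = Y₁.ncard + S₁.ncard + Z₁.ncard := by
      rw [Set.ncard_union_eq hd1 (Set.toFinite _) (Set.toFinite _),
        Set.ncard_union_eq sep₁.1 (Set.toFinite _) (Set.toFinite _)]
    rw [sep₁.2.2.2.1, Set.ncard_univ] at hsum
    have hY₁ : 0 < Y₁.ncard := (Set.ncard_pos (Set.toFinite _)).mpr ⟨s₂, hs₂m.2⟩
    have hZ₁ : 0 < Z₁.ncard := (Set.ncard_pos (Set.toFinite _)).mpr Z₁ne
    omega
  constructor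
  · -- more than 3 vertices
    have hc1 : Nat.card ({s₂}ᶜ : Set V) = ({s₂}ᶜ : Set V).ncard := Nat.card_coe_set_eq _
    have hc2 : ({s₂} : Set V).ncard + ({s₂}ᶜ : Set V).ncard = Nat.card V :=
      Set.ncard_add_ncard_compl _ (Set.toFinite _) (Set.toFinite _)
    rw [Set.ncard_singleton] at hc2
    rw [hc1]
    omega
  · intro Y' S' Z' hsep' hY' hZ'
    by_contra hlt
    push_neg at hlt
    have noSep : ∀ Y S Z : Set V, IsSeparation G Y S Z → S.ncard < 4 → s₁ ∈ S → s₂ ∈ S →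
        Y.Nonempty → Z.Nonempty → False := by
      intro Y S Z hsep hord hm1 hm2 hYne hZne
      rcases hT.2.1 _ _ _ hsep hord with h | h
      · exact hYne.ne_empty (main_claim_aux h3 hT h₁ h₂ he hs₁ hs₂ _ _ _ h hm1 hm2)
      · exact hZne.ne_empty (main_claim_aux h3 hT h₁ h₂ he hs₁ hs₂ _ _ _ h hm1 hm2)
    have hs₁c : s₁ ∈ ({s₂}ᶜ : Set V) := by simpa using he.ne
    set s₁' : ({s₂}ᶜ : Set V) := ⟨s₁, hs₁c⟩ with hs₁'def
    have hs₂img : ∀ A : Set ({s₂}ᶜ : Set V), s₂ ∉ Subtype.val '' A := by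
      rintro A ⟨a, _, ha⟩
      exact a.2 ha
    have hadjG' : ∀ a b : ({s₂}ᶜ : Set V), G.Adj ↑a ↑b → (contractEdge G s₁ s₂).Adj a b :=
      fun a b h => ⟨fun hab => h.ne (congrArg Subtype.val hab), Or.inl h⟩
    have sideCase : ∀ A B : Set ({s₂}ᶜ : Set V), IsSeparation (contractEdge G s₁ s₂) A S' B →
        A.Nonempty → B.Nonempty → s₁' ∈ A → False := by
      intro A B hsAB hAne hBne hmem
      have hsepG : IsSeparation G (Subtype.val '' A ∪ {s₂}) (Subtype.val '' S')
          (Subtype.val '' B) := by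
        refine ⟨?_, ?_, ?_, ?_, ?_⟩
        · refine Set.disjoint_union_left.mpr
            ⟨Set.disjoint_image_of_injective Subtype.val_injective hsAB.1, ?_⟩
          exact Set.disjoint_left.mpr fun x hx hmem' => hs₂img _ (hx ▸ hmem')
        · refine Set.disjoint_union_left.mpr
            ⟨Set.disjoint_image_of_injective Subtype.val_injective hsAB.2.1, ?_⟩
          exact Set.disjoint_left.mpr fun x hx hmem' => hs₂img _ (hx ▸ hmem')
        · exact Set.disjoint_image_of_injective Subtype.val_injective hsAB.2.2.1
        · apply Set.eq_univ_of_forall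
          intro v
          by_cases hv : v = s₂
          · subst hv
            simp only [Set.mem_union, Set.mem_singleton_iff]
            tauto
          · have hv3 : v ∈ Subtype.val '' A ∨ v ∈ Subtype.val '' S' ∨ v ∈ Subtype.val '' B := by
              rcases hsAB.cover ⟨v, hv⟩ with h | h | h
              exacts [Or.inl ⟨_, h, rfl⟩, Or.inr (Or.inl ⟨_, h, rfl⟩), Or.inr (Or.inr ⟨_, h, rfl⟩)]
            simp only [Set.mem_union]
            tauto
        · intro y hy z hz hadj
          obtain ⟨b, hb, rfl⟩ := hz
          rcases hy with ⟨a, ha, rfl⟩ | hy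
          · exact hsAB.2.2.2.2 a ha b hb (hadjG' a b hadj)
          · have hy' : y = s₂ := hy
            rw [hy'] at hadj
            have hne' : s₁' ≠ b := by
              rintro rfl
              exact Set.disjoint_left.mp hsAB.2.1 hmem hb
            have : (contractEdge G s₁ s₂).Adj s₁' b :=
              ⟨hne', Or.inr (Or.inl ⟨rfl, hadj.symm⟩)⟩
            exact hsAB.2.2.2.2 s₁' hmem b hb this
      have hord := h3.2 _ _ _ hsepG ⟨s₂, Or.inr rfl⟩ (hBne.image _)
      have hcS' : (Subtype.val '' S').ncard = S'.ncard :=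
        Set.ncard_image_of_injective _ Subtype.val_injective
      omega
    rcases hsep'.cover s₁' with hc | hc | hc
    · exact sideCase Y' Z' hsep' hY' hZ' hc
    · -- s₁ in the separator
      have hsepG : IsSeparation G (Subtype.val '' Y') (Subtype.val '' S' ∪ {s₂})
          (Subtype.val '' Z') := by
        refine ⟨?_, ?_, ?_, ?_, ?_⟩
        · refine Set.disjoint_union_right.mpr
            ⟨Set.disjoint_image_of_injective Subtype.val_injective hsep'.1, ?_⟩
          exact Set.disjoint_right.mpr fun x hx hmem' => hs₂img _ (hx ▸ hmem')
        · exact Set.disjoint_image_of_injective Subtype.val_injective hsep'.2.1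
        · refine Set.disjoint_union_left.mpr
            ⟨Set.disjoint_image_of_injective Subtype.val_injective hsep'.2.2.1, ?_⟩
          exact Set.disjoint_left.mpr fun x hx hmem' => hs₂img _ (hx ▸ hmem')
        · apply Set.eq_univ_of_forall
          intro v
          by_cases hv : v = s₂
          · subst hv
            simp only [Set.mem_union, Set.mem_singleton_iff]
            tauto
          · have hv3 : v ∈ Subtype.val '' Y' ∨ v ∈ Subtype.val '' S' ∨ v ∈ Subtype.val '' Z' := by
              rcases hsep'.cover ⟨v, hv⟩ with h | h | h
              exacts [Or.inl ⟨_, h, rfl⟩, Or.inr (Or.inl ⟨_, h, rfl⟩), Or.inr (Or.inr ⟨_, h, rfl⟩)]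
            simp only [Set.mem_union]
            tauto
        · rintro y ⟨a, ha, rfl⟩ z ⟨b, hb, rfl⟩ hadj
          exact hsep'.2.2.2.2 a ha b hb (hadjG' a b hadj)
      have hordS : (Subtype.val '' S' ∪ {s₂}).ncard < 4 := by
        have h1 := Set.ncard_union_le (Subtype.val '' S') ({s₂} : Set V)
        rw [Set.ncard_singleton, Set.ncard_image_of_injective _ Subtype.val_injective] at h1
        omega
      exact noSep _ _ _ hsepG hordS (Or.inl ⟨s₁', hc, rfl⟩) (Or.inr rfl)
        (hY'.image _) (hZ'.image _)
    · exact sideCase Z' Y' hsep'.flip hZ' hY' hc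
end

section
/- Let G be a 3-connected finite simple graph and (Y₀,S₀,Z₀) a proper non-degenerate separation of G of order 3 such that G[Z₀] is connected and (Y₀,S₀,Z₀) has no split vertex. Then 𝒯(Y₀,S₀,Z₀) := {(Y,S,Z) : (Y,S,Z) is a separation of G of order < 4 such that Z₀ ⊆ Z or |Z ∩ S₀| > |Y ∩ S₀|} is a G-tangle of order 4. -/
variable {V : Type*} {W : Type*}

set_option linter.unusedSectionVars false
set_option linter.unusedVariables false
set_option maxHeartbeats 1000000

section Aux
variable {V : Type*} {G : SimpleGraph V}

/-- Reachability via a walk whose support stays in `W`. -/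
def ReachIn (G : SimpleGraph V) (W : Set V) (u v : V) : Prop :=
  ∃ p : G.Walk u v, ∀ x ∈ p.support, x ∈ W

namespace ReachIn

lemma refl {W : Set V} {u : V} (hu : u ∈ W) : ReachIn G W u u :=
  ⟨SimpleGraph.Walk.nil, by simp [hu]⟩

lemma mem_left {W : Set V} {u v : V} (h : ReachIn G W u v) : u ∈ W := by
  obtain ⟨p, hp⟩ := h; exact hp u p.start_mem_support

lemma mem_right {W : Set V} {u v : V} (h : ReachIn G W u v) : v ∈ W := by
  obtain ⟨p, hp⟩ := h; exact hp v p.end_mem_support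

lemma symm {W : Set V} {u v : V} (h : ReachIn G W u v) : ReachIn G W v u := by
  obtain ⟨p, hp⟩ := h
  exact ⟨p.reverse, by intro x hx; exact hp x (by simpa using hx)⟩

lemma trans {W : Set V} {u v w : V} (h : ReachIn G W u v) (h' : ReachIn G W v w) :
    ReachIn G W u w := by
  obtain ⟨p, hp⟩ := h; obtain ⟨q, hq⟩ := h'
  refine ⟨p.append q, ?_⟩
  intro x hx
  rw [SimpleGraph.Walk.mem_support_append_iff] at hx
  exact hx.elim (hp x) (hq x)

lemma cons {W : Set V} {u v w : V} (hu : u ∈ W) (h : G.Adj u v) (h' : ReachIn G W v w) :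
    ReachIn G W u w := by
  obtain ⟨p, hp⟩ := h'
  refine ⟨SimpleGraph.Walk.cons h p, ?_⟩
  intro x hx
  rw [SimpleGraph.Walk.support_cons, List.mem_cons] at hx
  rcases hx with rfl | hx
  · exact hu
  · exact hp x hx

lemma snoc {W : Set V} {u v w : V} (h : ReachIn G W u v) (h' : G.Adj v w) (hw : w ∈ W) :
    ReachIn G W u w :=
  h.trans (cons h.mem_right h' (refl hw))

lemma mono {W W' : Set V} (hWW : W ⊆ W') {u v : V} (h : ReachIn G W u v) :
    ReachIn G W' u v := by
  obtain ⟨p, hp⟩ := h; exact ⟨p, fun x hx => hWW (hp x hx)⟩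

/-- An edge inside `W` from a nontrivial `ReachIn`. -/
lemma exists_adj {W : Set V} {u v : V} (h : ReachIn G W u v) (hne : u ≠ v) :
    ∃ a b, a ∈ W ∧ b ∈ W ∧ G.Adj a b := by
  obtain ⟨p, hp⟩ := h
  cases p with
  | nil => exact absurd rfl hne
  | cons h' q =>
    rename_i b
    refine ⟨u, b, hp u (by simp), hp b (by simp [SimpleGraph.Walk.support_cons]), h'⟩

end ReachIn

/-- From induced connectivity to `ReachIn`. -/
lemma reachIn_of_induce_walk {W : Set V} {x y : ↥W} (p : (G.induce W).Walk x y) :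
    ReachIn G W x y := by
  induction p with
  | nil => exact ReachIn.refl (Subtype.mem _)
  | cons h q ih => exact ReachIn.cons (Subtype.mem _) h ih

lemma connIn_of_induceConnected {W : Set V} (h : (G.induce W).Connected) :
    ∀ u ∈ W, ∀ v ∈ W, ReachIn G W u v := by
  intro u hu v hv
  obtain ⟨p⟩ := h.preconnected ⟨u, hu⟩ ⟨v, hv⟩
  exact reachIn_of_induce_walk p

/-- From a walk staying in `C` to induced reachability. -/
lemma induce_reachable_of_walk {C : Set V} :
    ∀ {a b : V} (p : G.Walk a b) (hp : ∀ x ∈ p.support, x ∈ C),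
      (G.induce C).Reachable ⟨a, hp a p.start_mem_support⟩ ⟨b, hp b p.end_mem_support⟩ := by
  intro a b p
  induction p with
  | nil => intro hp; rfl
  | cons h q ih =>
    intro hp
    rename_i u w _
    have hw : w ∈ C := hp w (by simp [SimpleGraph.Walk.support_cons])
    have h1 : (G.induce C).Adj ⟨u, hp u (by simp)⟩ ⟨w, hw⟩ := h
    exact (SimpleGraph.Adj.reachable h1).trans (ih (fun x hx => hp x (by simp [SimpleGraph.Walk.support_cons, hx])))

lemma induceConnected_of_connIn {C : Set V} (hne : C.Nonempty)
    (h : ∀ u ∈ C, ∀ v ∈ C, ReachIn G C u v) : (G.induce C).Connected := by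
  rw [SimpleGraph.connected_iff]
  constructor
  · rintro ⟨u, hu⟩ ⟨v, hv⟩
    obtain ⟨p, hp⟩ := h u hu v hv
    exact induce_reachable_of_walk p hp
  · exact ⟨⟨hne.choose, hne.choose_spec⟩⟩

end Aux

section Comp
variable {V : Type*} {G : SimpleGraph V}

lemma IsCompOutside.nonempty {X C : Set V} (hC : IsCompOutside G X C) : C.Nonempty := by
  obtain ⟨x⟩ := hC.2.1.nonempty
  exact ⟨x, x.2⟩

lemma IsCompOutside.connIn {X C : Set V} (hC : IsCompOutside G X C) :
    ∀ u ∈ C, ∀ v ∈ C, ReachIn G C u v :=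
  connIn_of_induceConnected hC.2.1

/-- Walks avoiding `X` starting in `C` stay in `C`. -/
lemma IsCompOutside.end_mem {X C : Set V} (hC : IsCompOutside G X C) :
    ∀ {a v : V} (p : G.Walk a v), (∀ x ∈ p.support, x ∉ X) → a ∈ C → v ∈ C := by
  intro a v p
  induction p with
  | nil => exact fun _ h => h
  | cons h q ih =>
    intro hp ha
    rename_i u b c
    have hb : b ∉ X := hp b (by simp [SimpleGraph.Walk.support_cons])
    exact ih (fun x hx => hp x (by simp [SimpleGraph.Walk.support_cons, hx])) (hC.2.2 u ha b hb h)

/-- Maximality: a `ReachIn`-connected set avoiding `X` that meets `C` is inside `C`. -/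
lemma IsCompOutside.subset_of_reachIn {X C D : Set V} (hC : IsCompOutside G X C)
    (hDX : D ⊆ Xᶜ) {x : V} (hxC : x ∈ C) (hconn : ∀ v ∈ D, ReachIn G D x v) : D ⊆ C := by
  intro v hv
  obtain ⟨p, hp⟩ := hconn v hv
  exact hC.end_mem p (fun y hy => hDX (hp y hy)) hxC

/-- Two components (of the same `X`) sharing a vertex are equal. -/
lemma IsCompOutside.eq_of_mem {X C C' : Set V} (hC : IsCompOutside G X C)
    (hC' : IsCompOutside G X C') {x : V} (hx : x ∈ C) (hx' : x ∈ C') : C = C' :=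
  Set.Subset.antisymm
    (hC'.subset_of_reachIn hC.1 hx' (hC.connIn x hx))
    (hC.subset_of_reachIn hC'.1 hx (hC'.connIn x hx'))

/-- Key: reach-in-`W` implies reach within the reach-set. -/
lemma reachIn_reachSet {W : Set V} :
    ∀ {a u : V}, ReachIn G W a u → ReachIn G {x | ReachIn G W a x} a u := by
  intro a u h
  obtain ⟨p, hp⟩ := h
  induction p with
  | nil => exact ReachIn.refl (ReachIn.refl (hp _ (by simp)))
  | cons h q ih =>
    rename_i a b c
    have hb : b ∈ W := hp b (by simp [SimpleGraph.Walk.support_cons])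
    have ha : a ∈ W := hp a (by simp)
    have hab : ReachIn G W a b := ⟨SimpleGraph.Walk.cons h SimpleGraph.Walk.nil, by
      intro x hx
      simp only [SimpleGraph.Walk.support_cons, SimpleGraph.Walk.support_nil,
        List.mem_cons, List.mem_singleton, List.not_mem_nil, or_false] at hx
      rcases hx with rfl | rfl
      · exact ha
      · exact hb⟩
    have ihq := ih (fun x hx => hp x (by simp [SimpleGraph.Walk.support_cons, hx]))
    have hsub : {x | ReachIn G W b x} ⊆ {x | ReachIn G W a x} :=
      fun x hx => hab.trans hx
    exact ReachIn.cons (ReachIn.refl ha) h (ihq.mono hsub)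

/-- Existence of the component of `v` outside `X`. -/
lemma exists_compOutside (G : SimpleGraph V) {X : Set V} {v : V} (hv : v ∉ X) :
    ∃ C, IsCompOutside G X C ∧ v ∈ C := by
  refine ⟨{u | ReachIn G Xᶜ v u}, ⟨?_, ?_, ?_⟩, ReachIn.refl hv⟩
  · exact fun u hu => hu.mem_right
  · refine induceConnected_of_connIn ⟨v, ReachIn.refl hv⟩ ?_
    intro u hu w hw
    exact (reachIn_reachSet hu).symm.trans (reachIn_reachSet hw)
  · intro u hu w hwX hadj
    exact hu.snoc hadj hwX

lemma Nbhd_subset_X {X C : Set V} (hC : IsCompOutside G X C) : Nbhd G C ⊆ X := by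
  rintro x ⟨hxC, u, huC, hadj⟩
  by_contra hxX
  exact hxC (hC.2.2 u huC x hxX hadj)

end Comp

section SepBasics
variable {V : Type*} {G : SimpleGraph V} {Y S Z : Set V}

namespace IsSeparation

lemma mem_cases (h : IsSeparation G Y S Z) (v : V) : v ∈ Y ∨ v ∈ S ∨ v ∈ Z := by
  have : v ∈ Y ∪ S ∪ Z := h.2.2.2.1 ▸ Set.mem_univ v
  rcases this with (h1 | h2) | h3
  · exact Or.inl h1
  · exact Or.inr (Or.inl h2)
  · exact Or.inr (Or.inr h3)

lemma notAdj (h : IsSeparation G Y S Z) {y z : V} (hy : y ∈ Y) (hz : z ∈ Z) :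
    ¬ G.Adj y z := h.2.2.2.2 y hy z hz

lemma notAdj' (h : IsSeparation G Y S Z) {y z : V} (hy : y ∈ Y) (hz : z ∈ Z) :
    ¬ G.Adj z y := fun hadj => h.notAdj hy hz hadj.symm

lemma not_mem_Y_of_mem_S (h : IsSeparation G Y S Z) {v : V} (hv : v ∈ S) : v ∉ Y :=
  fun hY => h.1.ne_of_mem hY hv rfl

lemma not_mem_Y_of_mem_Z (h : IsSeparation G Y S Z) {v : V} (hv : v ∈ Z) : v ∉ Y :=
  fun hY => h.2.1.ne_of_mem hY hv rfl

lemma not_mem_S_of_mem_Z (h : IsSeparation G Y S Z) {v : V} (hv : v ∈ Z) : v ∉ S :=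
  fun hS => h.2.2.1.ne_of_mem hS hv rfl

lemma not_mem_Z_of_mem_S (h : IsSeparation G Y S Z) {v : V} (hv : v ∈ S) : v ∉ Z :=
  fun hZ => h.2.2.1.ne_of_mem hv hZ rfl

/-- If `a` is adjacent to a vertex of `Z` and not in `Z`, then `a ∈ S`. -/
lemma mem_S_of_adj (h : IsSeparation G Y S Z) {a d : V} (hd : d ∈ Z) (hadj : G.Adj a d)
    (haZ : a ∉ Z) : a ∈ S := by
  rcases h.mem_cases a with hY | hS | hZ
  · exact absurd hadj (h.notAdj hY hd)
  · exact hS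
  · exact absurd hZ haZ

/-- Walks avoiding `S` starting in `Y` stay in `Y`. -/
lemma walk_stays (h : IsSeparation G Y S Z) :
    ∀ {a v : V} (p : G.Walk a v), (∀ x ∈ p.support, x ∉ S) → a ∈ Y → v ∈ Y := by
  intro a v p
  induction p with
  | nil => exact fun _ ha => ha
  | cons hadj q ih =>
    intro hp ha
    rename_i u b c
    have hbS : b ∉ S := hp b (by simp [SimpleGraph.Walk.support_cons])
    have hb : b ∈ Y := by
      rcases h.mem_cases b with h1 | h2 | h3
      · exact h1
      · exact absurd h2 hbS
      · exact absurd hadj (h.notAdj ha h3)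
    exact ih (fun x hx => hp x (by simp [SimpleGraph.Walk.support_cons, hx])) hb

/-- A `ReachIn`-connected set avoiding `S` lies in `Y` or in `Z`. -/
lemma side (h : IsSeparation G Y S Z) {D : Set V}
    (hconn : ∀ u ∈ D, ∀ v ∈ D, ReachIn G D u v) (hDS : ∀ x ∈ D, x ∉ S) :
    D ⊆ Y ∨ D ⊆ Z := by
  rcases Set.eq_empty_or_nonempty D with rfl | ⟨d, hd⟩
  · exact Or.inl (Set.empty_subset _)
  rcases h.mem_cases d with hY | hS | hZ
  · left
    intro v hv
    obtain ⟨p, hp⟩ := hconn d hd v hv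
    exact h.walk_stays p (fun x hx => hDS x (hp x hx)) hY
  · exact absurd hS (hDS d hd)
  · right
    intro v hv
    obtain ⟨p, hp⟩ := hconn d hd v hv
    have h' : IsSeparation G Z S Y := by
      refine ⟨h.2.2.1.symm, h.2.1.symm, h.1.symm, ?_, fun y hy z hz hadj => h.notAdj hz hy hadj.symm⟩
      rw [← h.2.2.2.1]; ext x; simp; tauto
    exact h'.walk_stays p (fun x hx => hDS x (hp x hx)) hZ

/-- The reverse of a separation. -/
lemma symm (h : IsSeparation G Y S Z) : IsSeparation G Z S Y := by
  refine ⟨h.2.2.1.symm, h.2.1.symm, h.1.symm, ?_, fun y hy z hz hadj => h.notAdj hz hy hadj.symm⟩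
  rw [← h.2.2.2.1]; ext x; simp; tauto

/-- A connected set avoiding `S`, adjacent to (or containing) a `Z`-vertex, is inside `Z`. -/
lemma subset_Z_of_adj (h : IsSeparation G Y S Z) {D : Set V}
    (hconn : ∀ u ∈ D, ∀ v ∈ D, ReachIn G D u v) (hDS : ∀ x ∈ D, x ∉ S)
    {c z : V} (hc : c ∈ D) (hz : z ∈ Z) (hadj : G.Adj c z) : D ⊆ Z := by
  rcases h.side hconn hDS with hDY | hDZ
  · exact absurd hadj (h.notAdj (hDY hc) hz)
  · exact hDZ

end IsSeparation
end SepBasics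

section Context
variable {V : Type*} [Fintype V] {G : SimpleGraph V}

/-- The separation associated with a component outside `X`. -/
lemma sep_of_comp {X C : Set V} (hC : IsCompOutside G X C) :
    IsSeparation G ((C ∪ Nbhd G C)ᶜ) (Nbhd G C) C := by
  refine ⟨?_, ?_, ?_, ?_, ?_⟩
  · rw [Set.disjoint_left]; intro x hx hN; exact hx (Or.inr hN)
  · rw [Set.disjoint_left]; intro x hx hN; exact hx (Or.inl hN)
  · rw [Set.disjoint_left]; intro x hx hN; exact hx.1 hN
  · ext x; simp only [Set.mem_union, Set.mem_compl_iff, Set.mem_univ, iff_true]; tauto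
  · intro y hy z hz hadj
    exact hy (Or.inr ⟨fun hyC => hy (Or.inl hyC), z, hz, hadj.symm⟩)

/-- 3-connectivity: the neighbourhood of a component has at least 3 vertices, provided
something lies outside. -/
lemma nbhd_card_ge (h3 : KConnected 3 G) {X C : Set V} (hC : IsCompOutside G X C)
    (hrest : ((C ∪ Nbhd G C)ᶜ).Nonempty) : 3 ≤ (Nbhd G C).ncard :=
  h3.2 _ _ _ (sep_of_comp hC) hrest hC.nonempty

variable {Y₀ S₀ Z₀ : Set V}

/-- Basic neighbourhood facts (B1): every vertex of `S₀` has a neighbour in `Z₀` and in `Y₀`. -/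
lemma S0_adj_Z0 (h3 : KConnected 3 G) (hsep : IsSeparation G Y₀ S₀ Z₀)
    (hY : Y₀.Nonempty) (hZ : Z₀.Nonempty) (hord : S₀.ncard = 3) {a : V} (ha : a ∈ S₀) :
    ∃ z ∈ Z₀, G.Adj a z := by
  by_contra hno
  push_neg at hno
  have hsep' : IsSeparation G (Y₀ ∪ {a}) (S₀ \ {a}) Z₀ := by
    obtain ⟨d1, d2, d3, hcov, hedge⟩ := hsep
    refine ⟨?_, ?_, ?_, ?_, ?_⟩
    · rw [Set.disjoint_left]
      rintro x (hx | rfl) ⟨hxS, hxa⟩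
      · exact d1.ne_of_mem hx hxS rfl
      · exact hxa rfl
    · rw [Set.disjoint_left]
      rintro x (hx | rfl) hxZ
      · exact d2.ne_of_mem hx hxZ rfl
      · exact d3.ne_of_mem ha hxZ rfl
    · exact Set.disjoint_of_subset_left Set.diff_subset d3
    · rw [← hcov]; ext x
      by_cases hxa : x = a
      · subst hxa; simp [ha]
      · simp only [Set.union_assoc, Set.mem_union, Set.mem_singleton_iff, Set.mem_diff, hxa,
          or_false, and_true]
        tauto
    · rintro y (hy | rfl) z hz hadj
      · exact hedge y hy z hz hadj
      · exact hno z hz hadj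
  have := h3.2 _ _ _ hsep' (hY.mono Set.subset_union_left) hZ
  have hcard : (S₀ \ {a}).ncard = 2 := by
    rw [Set.ncard_diff_singleton_of_mem ha, hord]
  omega

lemma S0_adj_Y0 (h3 : KConnected 3 G) (hsep : IsSeparation G Y₀ S₀ Z₀)
    (hY : Y₀.Nonempty) (hZ : Z₀.Nonempty) (hord : S₀.ncard = 3) {a : V} (ha : a ∈ S₀) :
    ∃ y ∈ Y₀, G.Adj a y :=
  S0_adj_Z0 h3 hsep.symm hZ hY hord ha

lemma compl_SZ (hsep : IsSeparation G Y₀ S₀ Z₀) : (S₀ ∪ Z₀)ᶜ = Y₀ := by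
  ext x
  simp only [Set.mem_compl_iff, Set.mem_union]
  constructor
  · intro hx
    rcases hsep.mem_cases x with h1 | h2 | h3
    · exact h1
    · exact absurd (Or.inl h2) hx
    · exact absurd (Or.inr h3) hx
  · intro hx
    rintro (h | h)
    · exact hsep.not_mem_Y_of_mem_S h hx
    · exact hsep.not_mem_Y_of_mem_Z h hx

/-- Components of `G[Y₀]`: they lie in `Y₀` and their neighbourhood is exactly `S₀`. -/
lemma Y0_comp_nbhd (h3 : KConnected 3 G) (hsep : IsSeparation G Y₀ S₀ Z₀)
    (hZ : Z₀.Nonempty) (hord : S₀.ncard = 3) {B : Set V}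
    (hB : IsCompOutside G (S₀ ∪ Z₀) B) : B ⊆ Y₀ ∧ Nbhd G B = S₀ := by
  have hBY : B ⊆ Y₀ := by rw [← compl_SZ hsep]; exact hB.1
  have hsub : Nbhd G B ⊆ S₀ := by
    intro x hx
    have hx' := Nbhd_subset_X hB hx
    rcases hx' with h | h
    · exact h
    · obtain ⟨hxB, u, huB, hadj⟩ := hx
      exact absurd hadj.symm (hsep.notAdj' (hBY huB) h)
  refine ⟨hBY, ?_⟩
  have hrest : ((B ∪ Nbhd G B)ᶜ).Nonempty := by
    obtain ⟨z, hz⟩ := hZ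
    refine ⟨z, ?_⟩
    rintro (h | h)
    · exact hsep.not_mem_Y_of_mem_Z hz (hBY h)
    · exact hsep.not_mem_S_of_mem_Z hz (hsub h)
  exact Set.eq_of_subset_of_ncard_le hsub (by rw [hord]; exact nbhd_card_ge h3 hB hrest)
    S₀.toFinite

/-- The (★★) lemma: each `z ∈ Z₀` has a component of `G − (S₀ ∪ {z})` inside `Z₀`
with full neighbourhood `S₀ ∪ {z}`. -/
lemma star (h3 : KConnected 3 G) (hsep : IsSeparation G Y₀ S₀ Z₀)
    (hord : S₀.ncard = 3) (hconn : (G.induce Z₀).Connected)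
    (hsplit : ¬ ∃ z : V, SplitVertex G S₀ Z₀ z) :
    ∀ z ∈ Z₀, ∃ C, IsCompOutside G (S₀ ∪ {z}) C ∧ C ⊆ Z₀ ∧ z ∉ C ∧
      Nbhd G C = S₀ ∪ {z} := by
  intro z hz
  push_neg at hsplit
  obtain ⟨C, hC, hC3⟩ := by
    have := hsplit z
    rw [SplitVertex] at this
    push_neg at this
    exact this hz
  have hzS : z ∉ S₀ := hsep.not_mem_S_of_mem_Z hz
  have hX4 : (S₀ ∪ {z}).ncard = 4 := by
    rw [Set.union_singleton, Set.ncard_insert_of_notMem hzS S₀.toFinite, hord]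
  have hsub : Nbhd G C ⊆ S₀ ∪ {z} := Nbhd_subset_X hC
  have hNeq : Nbhd G C = S₀ ∪ {z} := by
    rcases Set.eq_empty_or_nonempty ((C ∪ Nbhd G C)ᶜ) with hrest | hrest
    · apply Set.Subset.antisymm hsub
      intro x hx
      have : x ∈ C ∪ Nbhd G C := by
        by_contra hcon
        exact (Set.eq_empty_iff_forall_notMem.mp hrest x) hcon
      rcases this with h | h
      · exact absurd hx (fun hxX => (hC.1 h) hxX)
      · exact h
    · have h1 := nbhd_card_ge h3 hC hrest
      have h2 : (Nbhd G C).ncard ≤ 4 := hX4 ▸ Set.ncard_le_ncard hsub (Set.toFinite _)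
      exact Set.eq_of_subset_of_ncard_le hsub (by omega) (Set.toFinite _)
  have hzC : z ∉ C := fun h => hC.1 h (Or.inr rfl)
  have hCS0 : ∀ x ∈ C, x ∉ S₀ := fun x hx hS => hC.1 hx (Or.inl hS)
  -- z is adjacent to C
  have hzN : z ∈ Nbhd G C := hNeq ▸ Or.inr rfl
  obtain ⟨_, c, hcC, hcz⟩ := hzN
  have hCZ : C ⊆ Z₀ :=
    hsep.subset_Z_of_adj hC.connIn hCS0 hcC hz hcz
  exact ⟨C, hC, hCZ, hzC, hNeq⟩

end Context

section Card
variable {V : Type*} [Fintype V] {G : SimpleGraph V}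

lemma ncard_split {Y S Z : Set V} (hsep : IsSeparation G Y S Z) (A : Set V) :
    (A ∩ Y).ncard + (A ∩ S).ncard + (A ∩ Z).ncard = A.ncard := by
  have hA : A = (A ∩ Y) ∪ (A ∩ S) ∪ (A ∩ Z) := by
    ext x
    simp only [Set.mem_union, Set.mem_inter_iff]
    constructor
    · intro hx
      rcases hsep.mem_cases x with h | h | h
      · exact Or.inl (Or.inl ⟨hx, h⟩)
      · exact Or.inl (Or.inr ⟨hx, h⟩)
      · exact Or.inr ⟨hx, h⟩
    · tauto
  have d1 : Disjoint (A ∩ Y) (A ∩ S) :=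
    Set.disjoint_of_subset Set.inter_subset_right Set.inter_subset_right hsep.1
  have d2 : Disjoint ((A ∩ Y) ∪ (A ∩ S)) (A ∩ Z) := by
    apply Set.disjoint_union_left.mpr
    constructor
    · exact Set.disjoint_of_subset Set.inter_subset_right Set.inter_subset_right hsep.2.1
    · exact Set.disjoint_of_subset Set.inter_subset_right Set.inter_subset_right hsep.2.2.1
  conv_rhs => rw [hA]
  rw [Set.ncard_union_eq d2 (Set.toFinite _) (Set.toFinite _),
    Set.ncard_union_eq d1 (Set.toFinite _) (Set.toFinite _)]

lemma two_mem_of_one_lt_ncard {A : Set V} (h : 2 ≤ A.ncard) :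
    ∃ a ∈ A, ∃ b ∈ A, a ≠ b := by
  obtain ⟨a, b, ha, hb, hab⟩ := Set.one_lt_ncard_iff (Set.toFinite A) |>.mp (by omega)
  exact ⟨a, ha, b, hb, hab⟩

lemma mem_inter_of_two_le {A B C : Set V} (hAC : A ⊆ C) (hBC : B ⊆ C) (hC : C.ncard = 3)
    (hA : 2 ≤ A.ncard) (hB : 2 ≤ B.ncard) : ∃ x, x ∈ A ∧ x ∈ B := by
  by_contra hcon
  push_neg at hcon
  have hdisj : Disjoint A B := Set.disjoint_left.mpr hcon
  have : (A ∪ B).ncard = A.ncard + B.ncard :=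
    Set.ncard_union_eq hdisj (Set.toFinite _) (Set.toFinite _)
  have h4 : 4 ≤ (A ∪ B).ncard := by omega
  have h3 : (A ∪ B).ncard ≤ 3 := hC ▸ Set.ncard_le_ncard (Set.union_subset hAC hBC) (Set.toFinite _)
  omega

lemma eq_of_ncard_le_one {A : Set V} (h : A.ncard ≤ 1) {a b : V} (ha : a ∈ A) (hb : b ∈ A) :
    a = b := by
  by_contra hab
  have : ({a, b} : Set V).ncard ≤ A.ncard :=
    Set.ncard_le_ncard (by rintro x (rfl | rfl) <;> assumption) (Set.toFinite _)
  rw [Set.ncard_pair hab] at this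
  omega

lemma four_le_ncard {A : Set V} {a b c d : V} (ha : a ∈ A) (hb : b ∈ A) (hc : c ∈ A)
    (hd : d ∈ A) (hab : a ≠ b) (hac : a ≠ c) (had : a ≠ d) (hbc : b ≠ c) (hbd : b ≠ d)
    (hcd : c ≠ d) : 4 ≤ A.ncard := by
  have hsub : ({a, b, c, d} : Set V) ⊆ A := by rintro x (rfl | rfl | rfl | rfl) <;> assumption
  have : ({a, b, c, d} : Set V).ncard = 4 := by
    rw [Set.ncard_insert_of_notMem (by simp [hab, hac, had]) (Set.toFinite _),
      Set.ncard_insert_of_notMem (by simp [hbc, hbd]) (Set.toFinite _),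
      Set.ncard_pair hcd]
  have := Set.ncard_le_ncard hsub (Set.toFinite _)
  omega

end Card

section T1
variable {V : Type*} [Fintype V] {G : SimpleGraph V} {Y₀ S₀ Z₀ : Set V}

lemma tangle_T1 (h3 : KConnected 3 G) (hsep₀ : IsSeparation G Y₀ S₀ Z₀)
    (hY : Y₀.Nonempty) (hZ : Z₀.Nonempty) (hord : S₀.ncard = 3)
    (hconn : (G.induce Z₀).Connected) (hsplit : ¬ ∃ z : V, SplitVertex G S₀ Z₀ z)
    {Y S Z : Set V} (hsep : IsSeparation G Y S Z) (hS4 : S.ncard < 4) :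
    (Z₀ ⊆ Z ∨ (Y ∩ S₀).ncard < (Z ∩ S₀).ncard) ∨
      (Z₀ ⊆ Y ∨ (Z ∩ S₀).ncard < (Y ∩ S₀).ncard) := by
  by_contra hcon
  push_neg at hcon
  obtain ⟨⟨h1, h2⟩, h3', h4⟩ := hcon
  have hm : (Y ∩ S₀).ncard = (Z ∩ S₀).ncard := le_antisymm h4 h2
  -- S ∩ Z₀ is nonempty
  have hSZ0 : ∃ u, u ∈ S ∧ u ∈ Z₀ := by
    by_contra hno
    push_neg at hno
    have hZS : ∀ x ∈ Z₀, x ∉ S := fun x hx hS => hno x hS hx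
    rcases hsep.side (connIn_of_induceConnected hconn) hZS with h | h
    · exact h3' h
    · exact h1 h
  obtain ⟨u, huS, huZ0⟩ := hSZ0
  have hsplitS0 := ncard_split hsep S₀
  rw [Set.inter_comm S₀ Y, Set.inter_comm S₀ S, Set.inter_comm S₀ Z, hord] at hsplitS0
  have hm01 : (Y ∩ S₀).ncard = 0 ∨ (Y ∩ S₀).ncard = 1 := by omega
  rcases hm01 with hm0 | hm1
  · -- m = 0 : S₀ ⊆ S and u gives |S| ≥ 4
    have hmS : (S ∩ S₀).ncard = 3 := by omega
    have hSS0 : S ∩ S₀ = S₀ :=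
      Set.eq_of_subset_of_ncard_le Set.inter_subset_right (by omega) (Set.toFinite _)
    have hS0S : S₀ ⊆ S := by rw [← hSS0]; exact Set.inter_subset_left
    have huS0 : u ∉ S₀ := hsep₀.not_mem_S_of_mem_Z huZ0
    have : 4 ≤ S.ncard := by
      have h4' : (insert u S₀).ncard = 4 := by
        rw [Set.ncard_insert_of_notMem huS0 (Set.toFinite _), hord]
      have := Set.ncard_le_ncard (Set.insert_subset huS hS0S) (Set.toFinite S)
      omega
    omega
  · -- m = 1
    obtain ⟨p, hpY, hpS0⟩ : ∃ p, p ∈ Y ∧ p ∈ S₀ := by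
      have : (Y ∩ S₀).Nonempty := (Y ∩ S₀).nonempty_of_ncard_ne_zero (by omega)
      exact this.imp (fun x hx => ⟨hx.1, hx.2⟩)
    obtain ⟨q, hqZ, hqS0⟩ : ∃ q, q ∈ Z ∧ q ∈ S₀ := by
      have : (Z ∩ S₀).Nonempty := (Z ∩ S₀).nonempty_of_ncard_ne_zero (by omega)
      exact this.imp (fun x hx => ⟨hx.1, hx.2⟩)
    have hS3 : S.ncard = 3 := by
      have := h3.2 Y S Z hsep ⟨p, hpY⟩ ⟨q, hqZ⟩
      omega
    have hsplitS := ncard_split hsep₀ S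
    rw [hS3] at hsplitS
    -- the star component at u
    obtain ⟨C, hC, hCZ0, huC, hCN⟩ := star h3 hsep₀ hord hconn hsplit u huZ0
    have hCS : ∀ x ∈ C, x ∉ S → True := fun _ _ _ => trivial
    by_cases hCSempty : ∀ x ∈ C, x ∉ S
    · rcases hsep.side hC.connIn hCSempty with hCY | hCZ
      · have hqN : q ∈ Nbhd G C := hCN ▸ Or.inl hqS0
        obtain ⟨_, c, hcC, hcq⟩ := hqN
        exact hsep.notAdj (hCY hcC) hqZ hcq
      · have hpN : p ∈ Nbhd G C := hCN ▸ Or.inl hpS0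
        obtain ⟨_, c, hcC, hcp⟩ := hpN
        exact hsep.notAdj hpY (hCZ hcC) hcp.symm
    · push_neg at hCSempty
      obtain ⟨v, hvC, hvS⟩ := hCSempty
      have hvZ0 : v ∈ Z₀ := hCZ0 hvC
      have hvu : v ≠ u := fun h => huC (h ▸ hvC)
      have h2card : 2 ≤ (S ∩ Z₀).ncard := by
        have : ({v, u} : Set V) ⊆ S ∩ Z₀ := by
          rintro x (rfl | rfl)
          · exact ⟨hvS, hvZ0⟩
          · exact ⟨huS, huZ0⟩
        have := Set.ncard_le_ncard this (Set.toFinite _)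
        rw [Set.ncard_pair hvu] at this
        omega
      have hmS1 : (S ∩ S₀).ncard = 1 := by omega
      have hSY0 : (S ∩ Y₀).ncard = 0 := by omega
      have hSY0' : S ∩ Y₀ = ∅ := (Set.ncard_eq_zero (Set.toFinite _)).mp hSY0
      -- a component of G[Y₀]
      obtain ⟨y, hy⟩ := hY
      have hyX : y ∉ S₀ ∪ Z₀ := by
        rintro (h | h)
        · exact hsep₀.not_mem_Y_of_mem_S h hy
        · exact hsep₀.not_mem_Y_of_mem_Z h hy
      obtain ⟨B, hB, hyB⟩ := exists_compOutside G hyX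
      obtain ⟨hBY0, hBN⟩ := Y0_comp_nbhd h3 hsep₀ hZ hord hB
      have hBS : ∀ x ∈ B, x ∉ S := by
        intro x hx hxS
        have : x ∈ S ∩ Y₀ := ⟨hxS, hBY0 hx⟩
        rw [hSY0'] at this
        exact this
      rcases hsep.side hB.connIn hBS with hBY | hBZ
      · have hqN : q ∈ Nbhd G B := hBN ▸ hqS0
        obtain ⟨_, c, hcB, hcq⟩ := hqN
        exact hsep.notAdj (hBY hcB) hqZ hcq
      · have hpN : p ∈ Nbhd G B := hBN ▸ hpS0
        obtain ⟨_, c, hcB, hcp⟩ := hpN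
        exact hsep.notAdj hpY (hBZ hcB) hcp.symm

end T1

section Witness
variable {V : Type*} [Fintype V] (G : SimpleGraph V) (Y₀ S₀ Z₀ : Set V)

/-- Witness of type C: a star component inside `Z`. -/
def WitC (Z : Set V) : Prop :=
  ∃ e ∈ Z₀, ∃ C, IsCompOutside G (S₀ ∪ {e}) C ∧ C ⊆ Z₀ ∧ e ∉ C ∧
    Nbhd G C = S₀ ∪ {e} ∧ C ⊆ Z

/-- Witness of type B: a component of `G[Y₀]` inside `Z`. -/
def WitB (Z : Set V) : Prop :=
  ∃ B, IsCompOutside G (S₀ ∪ Z₀) B ∧ B ⊆ Z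

/-- Witness of type E (exceptional shape). -/
def WitE (Z : Set V) : Prop :=
  (∀ u ∈ Y₀, ∀ v ∈ Y₀, ReachIn G Y₀ u v) ∧ (Y₀ \ Z).ncard ≤ 1 ∧
    (S₀ \ Z).ncard ≤ 1 ∧ 2 ≤ (S₀ ∩ Z).ncard

variable {G Y₀ S₀ Z₀}

lemma witness_lemma (h3 : KConnected 3 G) (hsep₀ : IsSeparation G Y₀ S₀ Z₀)
    (hY : Y₀.Nonempty) (hZ : Z₀.Nonempty) (hord : S₀.ncard = 3)
    (hconn : (G.induce Z₀).Connected) (hsplit : ¬ ∃ z : V, SplitVertex G S₀ Z₀ z)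
    {Y S Z : Set V} (hsep : IsSeparation G Y S Z) (hS4 : S.ncard < 4)
    (hmaj : (Y ∩ S₀).ncard < (Z ∩ S₀).ncard) :
    WitC G S₀ Z₀ Z ∨ WitB G S₀ Z₀ Z ∨ WitE G Y₀ S₀ Z := by
  have hsplitS0 := ncard_split hsep S₀
  rw [Set.inter_comm S₀ Y, Set.inter_comm S₀ S, Set.inter_comm S₀ Z, hord] at hsplitS0
  obtain ⟨q, hqZ, hqS0⟩ : ∃ q, q ∈ Z ∧ q ∈ S₀ := by
    have : (Z ∩ S₀).Nonempty := (Z ∩ S₀).nonempty_of_ncard_ne_zero (by omega)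
    exact this.imp (fun x hx => ⟨hx.1, hx.2⟩)
  by_cases hex : ∃ z ∈ Z₀, ∃ C, IsCompOutside G (S₀ ∪ {z}) C ∧ C ⊆ Z₀ ∧ z ∉ C ∧
      Nbhd G C = S₀ ∪ {z} ∧ ∀ x ∈ C, x ∉ S
  · left
    obtain ⟨z, hz, C, hC, hCZ0, hzC, hCN, hCS⟩ := hex
    have hqN : q ∈ Nbhd G C := hCN ▸ Or.inl hqS0
    obtain ⟨_, c, hcC, hcq⟩ := hqN
    have hCZ : C ⊆ Z := hsep.subset_Z_of_adj hC.connIn hCS hcC hqZ hcq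
    exact ⟨z, hz, C, hC, hCZ0, hzC, hCN, hCZ⟩
  · push_neg at hex
    have hstar : ∀ z ∈ Z₀, ∃ C, IsCompOutside G (S₀ ∪ {z}) C ∧ C ⊆ Z₀ ∧ z ∉ C ∧
        Nbhd G C = S₀ ∪ {z} ∧ ∃ x ∈ C, x ∈ S := by
      intro z hz
      obtain ⟨C, hC, hCZ0, hzC, hCN⟩ := star h3 hsep₀ hord hconn hsplit z hz
      obtain ⟨x, hxC, hxS⟩ := by
        have := hex z hz C hC hCZ0 hzC hCN
        exact this
      exact ⟨C, hC, hCZ0, hzC, hCN, x, hxC, hxS⟩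
    -- |S ∩ Z₀| ≥ 2
    have hSZ02 : 2 ≤ (S ∩ Z₀).ncard := by
      obtain ⟨z₀, hz₀⟩ := hZ
      obtain ⟨C₀, _, hC₀Z0, _, _, u, huC, huS⟩ := hstar z₀ hz₀
      obtain ⟨Cu, _, hCuZ0, huCu, _, v, hvC, hvS⟩ := hstar u (hC₀Z0 huC)
      have hvu : v ≠ u := fun h => huCu (h ▸ hvC)
      have : ({v, u} : Set V) ⊆ S ∩ Z₀ := by
        rintro x (rfl | rfl)
        · exact ⟨hvS, hCuZ0 hvC⟩
        · exact ⟨huS, hC₀Z0 huC⟩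
      have := Set.ncard_le_ncard this (Set.toFinite _)
      rw [Set.ncard_pair hvu] at this
      omega
    by_cases hBex : ∃ B, IsCompOutside G (S₀ ∪ Z₀) B ∧ ∀ x ∈ B, x ∉ S
    · right; left
      obtain ⟨B, hB, hBS⟩ := hBex
      obtain ⟨hBY0, hBN⟩ := Y0_comp_nbhd h3 hsep₀ hZ hord hB
      have hqN : q ∈ Nbhd G B := hBN ▸ hqS0
      obtain ⟨_, c, hcB, hcq⟩ := hqN
      exact ⟨B, hB, hsep.subset_Z_of_adj hB.connIn hBS hcB hqZ hcq⟩
    · right; right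
      push_neg at hBex
      have hsplitS := ncard_split hsep₀ S
      -- |S ∩ Y₀| ≥ 1
      have hSY01 : 1 ≤ (S ∩ Y₀).ncard := by
        obtain ⟨y, hy⟩ := hY
        have hyX : y ∉ S₀ ∪ Z₀ := by
          rintro (h | h)
          · exact hsep₀.not_mem_Y_of_mem_S h hy
          · exact hsep₀.not_mem_Y_of_mem_Z h hy
        obtain ⟨B, hB, hyB⟩ := exists_compOutside G hyX
        obtain ⟨x, hxB, hxS⟩ := by
          have := hBex B hB
          exact this
        have hxY0 : x ∈ Y₀ := (Y0_comp_nbhd h3 hsep₀ hZ hord hB).1 hxB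
        have : ({x} : Set V) ⊆ S ∩ Y₀ := by rintro _ rfl; exact ⟨hxS, hxY0⟩
        have := Set.ncard_le_ncard this (Set.toFinite _)
        simpa using this
      have hSY0e : (S ∩ Y₀).ncard = 1 ∧ (S ∩ S₀).ncard = 0 := by
        constructor <;> omega
      obtain ⟨w, hw⟩ : ∃ w, S ∩ Y₀ = {w} := Set.ncard_eq_one.mp hSY0e.1
      have hwY0 : w ∈ Y₀ := by
        have : w ∈ S ∩ Y₀ := hw ▸ rfl
        exact this.2
      have hwS : w ∈ S := by
        have : w ∈ S ∩ Y₀ := hw ▸ rfl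
        exact this.1
      -- every Y₀-component contains w
      have hcompw : ∀ B, IsCompOutside G (S₀ ∪ Z₀) B → w ∈ B := by
        intro B hB
        obtain ⟨x, hxB, hxS⟩ := hBex B hB
        have hxY0 : x ∈ Y₀ := (Y0_comp_nbhd h3 hsep₀ hZ hord hB).1 hxB
        have : x ∈ S ∩ Y₀ := ⟨hxS, hxY0⟩
        rw [hw] at this
        exact this ▸ hxB
      -- Y₀ is connected
      have hY0conn : ∀ u ∈ Y₀, ∀ v ∈ Y₀, ReachIn G Y₀ u v := by
        intro u hu v hv
        have huX : u ∉ S₀ ∪ Z₀ := by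
          rintro (h | h)
          · exact hsep₀.not_mem_Y_of_mem_S h hu
          · exact hsep₀.not_mem_Y_of_mem_Z h hu
        have hvX : v ∉ S₀ ∪ Z₀ := by
          rintro (h | h)
          · exact hsep₀.not_mem_Y_of_mem_S h hv
          · exact hsep₀.not_mem_Y_of_mem_Z h hv
        obtain ⟨Bu, hBu, huBu⟩ := exists_compOutside G huX
        obtain ⟨Bv, hBv, hvBv⟩ := exists_compOutside G hvX
        have heq : Bu = Bv := hBu.eq_of_mem hBv (hcompw Bu hBu) (hcompw Bv hBv)
        have := hBu.connIn u huBu v (heq ▸ hvBv)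
        exact this.mono (Y0_comp_nbhd h3 hsep₀ hZ hord hBu).1
      -- S₀ ∩ S = ∅, so S₀ \ Z = S₀ ∩ Y
      have hSS0 : S ∩ S₀ = ∅ := (Set.ncard_eq_zero (Set.toFinite _)).mp hSY0e.2
      have hS0Z2 : 2 ≤ (S₀ ∩ Z).ncard := by
        rw [Set.inter_comm S₀ Z]
        omega
      have hS0dZ : S₀ \ Z = Y ∩ S₀ := by
        ext x
        simp only [Set.mem_diff, Set.mem_inter_iff]
        constructor
        · rintro ⟨hx, hxZ⟩
          rcases hsep.mem_cases x with h | h | h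
          · exact ⟨h, hx⟩
          · exact absurd (show x ∈ S ∩ S₀ from ⟨h, hx⟩) (by rw [hSS0]; exact id)
          · exact absurd h hxZ
        · rintro ⟨hxY, hx⟩
          exact ⟨hx, fun hxZ => hsep.2.1.ne_of_mem hxY hxZ rfl⟩
      have hS0dZ1 : (S₀ \ Z).ncard ≤ 1 := by
        rw [hS0dZ]
        omega
      -- finally : Y₀ \ Z ⊆ {w}
      have hY0dZ : Y₀ \ Z ⊆ {w} := by
        rintro y' ⟨hy'Y0, hy'Z⟩
        by_contra hy'w
        have hy'X : y' ∉ (Y₀ \ {w})ᶜ := by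
          simp only [Set.mem_compl_iff, not_not]
          exact ⟨hy'Y0, hy'w⟩
        obtain ⟨E, hE, hy'E⟩ := exists_compOutside G hy'X
        have hEY0w : E ⊆ Y₀ \ {w} := by
          intro x hx
          have := hE.1 hx
          simpa using this
        have hEN : Nbhd G E ⊆ S₀ ∪ {w} := by
          rintro x ⟨hxE, u, huE, hadj⟩
          have hxX : x ∉ Y₀ \ {w} := by
            intro hcon
            exact hxE (hE.2.2 u huE x (by simpa using hcon) hadj)
          have huY0 : u ∈ Y₀ := (hEY0w huE).1
          rcases hsep₀.mem_cases x with h | h | h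
          · right
            simp only [Set.mem_singleton_iff]
            by_contra hxw
            exact hxX ⟨h, hxw⟩
          · exact Or.inl h
          · exact absurd hadj (hsep₀.notAdj huY0 h)
        have hrest : ((E ∪ Nbhd G E)ᶜ).Nonempty := by
          obtain ⟨z₀, hz₀⟩ := hZ
          refine ⟨z₀, ?_⟩
          rintro (h | h)
          · exact hsep₀.not_mem_Y_of_mem_Z hz₀ (hEY0w h).1
          · rcases hEN h with h' | h'
            · exact hsep₀.not_mem_S_of_mem_Z hz₀ h'
            · rw [Set.mem_singleton_iff] at h'
              subst h'
              exact hsep₀.not_mem_Y_of_mem_Z hz₀ hwY0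
        have hE3 := nbhd_card_ge h3 hE hrest
        have hENS0 : 2 ≤ (Nbhd G E ∩ S₀).ncard := by
          have hsub : Nbhd G E ⊆ (Nbhd G E ∩ S₀) ∪ {w} := by
            intro x hx
            rcases hEN hx with h | h
            · exact Or.inl ⟨hx, h⟩
            · exact Or.inr h
          have h1 : (Nbhd G E).ncard ≤ ((Nbhd G E ∩ S₀) ∪ {w}).ncard :=
            Set.ncard_le_ncard hsub (Set.toFinite _)
          have h2 : ((Nbhd G E ∩ S₀) ∪ {w}).ncard ≤ (Nbhd G E ∩ S₀).ncard + 1 := by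
            have := Set.ncard_union_le (Nbhd G E ∩ S₀) ({w} : Set V)
            simpa using this
          omega
        obtain ⟨x, hx1, hx2⟩ := mem_inter_of_two_le
          (Set.inter_subset_right (s := Nbhd G E)) (Set.inter_subset_right (s := Z)) hord
          hENS0 (by rw [Set.inter_comm Z S₀]; exact hS0Z2)
        obtain ⟨hxE, u, huE, hadj⟩ := hx1.1
        have hES : ∀ x ∈ E, x ∉ S := by
          intro e heE heS
          have : e ∈ Y₀ ∩ S := ⟨(hEY0w heE).1, heS⟩
          rw [Set.inter_comm] at this
          rw [hw] at this
          exact (hEY0w heE).2 this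
        have hEZ : E ⊆ Z := hsep.subset_Z_of_adj hE.connIn hES huE hx2.1 hadj
        exact hy'Z (hEZ hy'E)
      have hY0dZ1 : (Y₀ \ Z).ncard ≤ 1 := by
        have := Set.ncard_le_ncard hY0dZ (Set.toFinite _)
        simpa using this
      exact ⟨hY0conn, hY0dZ1, hS0dZ1, hS0Z2⟩

end Witness

section T2
variable {V : Type*} [Fintype V] {G : SimpleGraph V} {Y₀ S₀ Z₀ : Set V}

/-- Common interface for C- and B-witnesses. -/
def WitCB (G : SimpleGraph V) (Y₀ S₀ Z₀ Z : Set V) : Prop :=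
  ∃ D, (∀ u ∈ D, ∀ v ∈ D, ReachIn G D u v) ∧ D ⊆ Z ∧ (∀ x ∈ D, x ∉ S₀) ∧
    (∀ a ∈ S₀, a ∉ D ∧ ∃ d ∈ D, G.Adj d a) ∧
    ((∃ e ∈ Z₀, IsCompOutside G (S₀ ∪ {e}) D ∧ D ⊆ Z₀ ∧ e ∉ D ∧ Nbhd G D = S₀ ∪ {e}) ∨
      (IsCompOutside G (S₀ ∪ Z₀) D ∧ D ⊆ Y₀ ∧ Nbhd G D = S₀))

lemma witC_to_CB (hsep₀ : IsSeparation G Y₀ S₀ Z₀) {Z : Set V} (h : WitC G S₀ Z₀ Z) :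
    WitCB G Y₀ S₀ Z₀ Z := by
  obtain ⟨e, he, C, hC, hCZ0, heC, hCN, hCZ⟩ := h
  refine ⟨C, hC.connIn, hCZ, fun x hx => hsep₀.not_mem_S_of_mem_Z (hCZ0 hx), ?_,
    Or.inl ⟨e, he, hC, hCZ0, heC, hCN⟩⟩
  intro a ha
  have haN : a ∈ Nbhd G C := hCN ▸ Or.inl ha
  obtain ⟨haC, d, hdC, hadj⟩ := haN
  exact ⟨haC, d, hdC, hadj⟩

lemma witB_to_CB (h3 : KConnected 3 G) (hsep₀ : IsSeparation G Y₀ S₀ Z₀)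
    (hZ : Z₀.Nonempty) (hord : S₀.ncard = 3) {Z : Set V} (h : WitB G S₀ Z₀ Z) :
    WitCB G Y₀ S₀ Z₀ Z := by
  obtain ⟨B, hB, hBZ⟩ := h
  obtain ⟨hBY0, hBN⟩ := Y0_comp_nbhd h3 hsep₀ hZ hord hB
  refine ⟨B, hB.connIn, hBZ,
    fun x hx hxS => hsep₀.not_mem_Y_of_mem_S hxS (hBY0 hx), ?_,
    Or.inr ⟨hB, hBY0, hBN⟩⟩
  intro a ha
  have haN : a ∈ Nbhd G B := hBN ▸ ha
  obtain ⟨haB, d, hdB, hadj⟩ := haN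
  exact ⟨haB, d, hdB, hadj⟩

/-- T2, two `Z₀`-big sides. -/
lemma caseJ2 (h3 : KConnected 3 G) (hsep₀ : IsSeparation G Y₀ S₀ Z₀)
    (hY : Y₀.Nonempty) (hZ : Z₀.Nonempty) (hord : S₀.ncard = 3)
    {Z1 Z2 Y3 S3 Z3 : Set V}
    (hP1 : Z₀ ⊆ Z1) (hP2 : Z₀ ⊆ Z2)
    (hsep3 : IsSeparation G Y3 S3 Z3)
    (hT3 : Z₀ ⊆ Z3 ∨ (Y3 ∩ S₀).ncard < (Z3 ∩ S₀).ncard)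
    (hNCV : ∀ x, x ∈ Z1 → x ∈ Z2 → x ∈ Z3 → False)
    (hNCE : ∀ u v, G.Adj u v → (u ∈ Z1 ∨ v ∈ Z1) → (u ∈ Z2 ∨ v ∈ Z2) →
      (u ∈ Z3 ∨ v ∈ Z3) → False) : False := by
  rcases hT3 with hP3 | hmaj
  · obtain ⟨z, hz⟩ := hZ
    exact hNCV z (hP1 hz) (hP2 hz) (hP3 hz)
  · obtain ⟨a, haZ3, haS0⟩ : ∃ a, a ∈ Z3 ∧ a ∈ S₀ := by
      have : (Z3 ∩ S₀).Nonempty := (Z3 ∩ S₀).nonempty_of_ncard_ne_zero (by omega)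
      exact this.imp (fun x hx => ⟨hx.1, hx.2⟩)
    by_cases h1 : a ∈ Z1
    · by_cases h2 : a ∈ Z2
      · exact hNCV a h1 h2 haZ3
      · obtain ⟨z, hzZ0, hadj⟩ := S0_adj_Z0 h3 hsep₀ hY hZ hord haS0
        exact hNCE a z hadj (Or.inr (hP1 hzZ0)) (Or.inr (hP2 hzZ0)) (Or.inl haZ3)
    · obtain ⟨z, hzZ0, hadj⟩ := S0_adj_Z0 h3 hsep₀ hY hZ hord haS0
      exact hNCE a z hadj (Or.inr (hP1 hzZ0)) (Or.inr (hP2 hzZ0)) (Or.inl haZ3)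

/-- T2, one big side and a C-witness. -/
lemma caseJ1C {Z1 Z2 Z3 : Set V}
    (hP1 : Z₀ ⊆ Z1) (hW2 : WitC G S₀ Z₀ Z2)
    (hx3 : ∃ a, a ∈ Z3 ∧ a ∈ S₀)
    (hNCE : ∀ u v, G.Adj u v → (u ∈ Z1 ∨ v ∈ Z1) → (u ∈ Z2 ∨ v ∈ Z2) →
      (u ∈ Z3 ∨ v ∈ Z3) → False) : False := by
  obtain ⟨e, he, C, hC, hCZ0, heC, hCN, hCZ⟩ := hW2
  obtain ⟨a, haZ3, haS0⟩ := hx3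
  have haN : a ∈ Nbhd G C := hCN ▸ Or.inl haS0
  obtain ⟨haC, d, hdC, hadj⟩ := haN
  exact hNCE a d hadj.symm (Or.inr (hP1 (hCZ0 hdC))) (Or.inr (hCZ hdC)) (Or.inl haZ3)

/-- T2, one big side and two E-witnesses. -/
lemma caseJ1EE (h3 : KConnected 3 G) (hsep₀ : IsSeparation G Y₀ S₀ Z₀)
    (hY : Y₀.Nonempty) (hZ : Z₀.Nonempty) (hord : S₀.ncard = 3)
    {Z1 Z2 Z3 : Set V}
    (hP1 : Z₀ ⊆ Z1) (hE2 : 2 ≤ (S₀ ∩ Z2).ncard) (hE3 : 2 ≤ (S₀ ∩ Z3).ncard)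
    (hNCV : ∀ x, x ∈ Z1 → x ∈ Z2 → x ∈ Z3 → False)
    (hNCE : ∀ u v, G.Adj u v → (u ∈ Z1 ∨ v ∈ Z1) → (u ∈ Z2 ∨ v ∈ Z2) →
      (u ∈ Z3 ∨ v ∈ Z3) → False) : False := by
  obtain ⟨g, hg2, hg3⟩ := mem_inter_of_two_le
    (Set.inter_subset_left (t := Z2)) (Set.inter_subset_left (t := Z3)) hord hE2 hE3
  obtain ⟨z, hzZ0, hadj⟩ := S0_adj_Z0 h3 hsep₀ hY hZ hord hg2.1
  exact hNCE g z hadj (Or.inr (hP1 hzZ0)) (Or.inl hg2.2) (Or.inl hg3.2)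

/-- T2, no big side, two E-witnesses and one C/B-witness. -/
lemma caseJ0_2E (hord : S₀.ncard = 3) {Z1 Z2 Z3 : Set V}
    (hW1 : WitCB G Y₀ S₀ Z₀ Z1)
    (hE2 : 2 ≤ (S₀ ∩ Z2).ncard) (hE3 : 2 ≤ (S₀ ∩ Z3).ncard)
    (hNCV : ∀ x, x ∈ Z1 → x ∈ Z2 → x ∈ Z3 → False)
    (hNCE : ∀ u v, G.Adj u v → (u ∈ Z1 ∨ v ∈ Z1) → (u ∈ Z2 ∨ v ∈ Z2) →
      (u ∈ Z3 ∨ v ∈ Z3) → False) : False := by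
  obtain ⟨g, hg2, hg3⟩ := mem_inter_of_two_le
    (Set.inter_subset_left (t := Z2)) (Set.inter_subset_left (t := Z3)) hord hE2 hE3
  obtain ⟨D, hconn, hDZ, hDS0, hadjS0, hkind⟩ := hW1
  obtain ⟨hgD, d, hdD, hadj⟩ := hadjS0 g hg2.1
  exact hNCE g d hadj.symm (Or.inr (hDZ hdD)) (Or.inl hg2.2) (Or.inl hg3.2)

/-- T2, all three E-witnesses. -/
lemma caseJ0_3E (hY : Y₀.Nonempty) (hnd : ¬ Degenerate G Y₀ S₀ Z₀)
    {Z1 Z2 Z3 : Set V}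
    (hc : ∀ u ∈ Y₀, ∀ v ∈ Y₀, ReachIn G Y₀ u v)
    (hY1 : (Y₀ \ Z1).ncard ≤ 1) (hY2 : (Y₀ \ Z2).ncard ≤ 1) (hY3 : (Y₀ \ Z3).ncard ≤ 1)
    (hS1 : (S₀ \ Z1).ncard ≤ 1) (hS2 : (S₀ \ Z2).ncard ≤ 1) (hS3 : (S₀ \ Z3).ncard ≤ 1)
    (hNCE : ∀ u v, G.Adj u v → (u ∈ Z1 ∨ v ∈ Z1) → (u ∈ Z2 ∨ v ∈ Z2) →
      (u ∈ Z3 ∨ v ∈ Z3) → False) : False := by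
  have key : ∀ (A : Set V) (u v : V), u ∈ A → v ∈ A → u ≠ v → G.Adj u v →
      ((A \ Z1).ncard ≤ 1) → ((A \ Z2).ncard ≤ 1) → ((A \ Z3).ncard ≤ 1) → False := by
    intro A u v hu hv huv hadj hA1 hA2 hA3
    refine hNCE u v hadj ?_ ?_ ?_
    · by_contra hcon
      push_neg at hcon
      exact huv (eq_of_ncard_le_one hA1 ⟨hu, hcon.1⟩ ⟨hv, hcon.2⟩)
    · by_contra hcon
      push_neg at hcon
      exact huv (eq_of_ncard_le_one hA2 ⟨hu, hcon.1⟩ ⟨hv, hcon.2⟩)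
    · by_contra hcon
      push_neg at hcon
      exact huv (eq_of_ncard_le_one hA3 ⟨hu, hcon.1⟩ ⟨hv, hcon.2⟩)
  by_cases hY2' : 2 ≤ Y₀.ncard
  · obtain ⟨y, hy, y', hy', hyy⟩ := two_mem_of_one_lt_ncard hY2'
    obtain ⟨a, b, haY0, hbY0, hab⟩ := (hc y hy y' hy').exists_adj hyy
    exact key Y₀ a b haY0 hbY0 hab.ne hab hY1 hY2 hY3
  · have hY0card : Y₀.ncard = 1 := by
      have := hY.ncard_pos (Set.toFinite _)
      omega
    rw [Degenerate] at hnd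
    push_neg at hnd
    obtain ⟨u, hu, v, hv, hadj⟩ := by
      have := hnd hY0card
      exact this
    exact key S₀ u v hu hv hadj.ne hadj hS1 hS2 hS3

lemma third_elem (hord : S₀.ncard = 3) (x₂ x₃ : V) : ∃ x₁ ∈ S₀, x₁ ≠ x₂ ∧ x₁ ≠ x₃ := by
  by_contra hcon
  push_neg at hcon
  have hsub : S₀ ⊆ {x₂, x₃} := by
    intro x hx
    rcases Classical.em (x = x₂) with h | h
    · exact Or.inl h
    · exact Or.inr (hcon x hx h)
  have h1 : ({x₂, x₃} : Set V).ncard ≤ 2 := by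
    have := Set.ncard_insert_le x₂ ({x₃} : Set V)
    simp only [Set.ncard_singleton] at this
    omega
  have := Set.ncard_le_ncard hsub (Set.toFinite _)
  omega

/-- The σ–τ trick: if every star component meets `S'`, then `S' ∩ Z₀` contains
two distinct vertices. -/
lemma sigma_pair (h3 : KConnected 3 G) (hsep₀ : IsSeparation G Y₀ S₀ Z₀)
    (hZ : Z₀.Nonempty) (hord : S₀.ncard = 3) (hconn : (G.induce Z₀).Connected)
    (hsplit : ¬ ∃ z : V, SplitVertex G S₀ Z₀ z) (S' : Set V)
    (h : ∀ z ∈ Z₀, ∀ C, IsCompOutside G (S₀ ∪ {z}) C → C ⊆ Z₀ → z ∉ C →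
      Nbhd G C = S₀ ∪ {z} → ∃ x ∈ C, x ∈ S') :
    ∃ σ ∈ S' ∩ Z₀, ∃ τ ∈ S' ∩ Z₀, σ ≠ τ := by
  obtain ⟨z₀, hz₀⟩ := hZ
  obtain ⟨C, hC, hCZ0, hzC, hCN⟩ := star h3 hsep₀ hord hconn hsplit z₀ hz₀
  obtain ⟨σ, hσC, hσS⟩ := h z₀ hz₀ C hC hCZ0 hzC hCN
  have hσZ0 : σ ∈ Z₀ := hCZ0 hσC
  obtain ⟨C', hC', hC'Z0, hσC', hC'N⟩ := star h3 hsep₀ hord hconn hsplit σ hσZ0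
  obtain ⟨τ, hτC', hτS⟩ := h σ hσZ0 C' hC' hC'Z0 hσC' hC'N
  exact ⟨σ, ⟨hσS, hσZ0⟩, τ, ⟨hτS, hC'Z0 hτC'⟩, fun hh => hσC' (hh ▸ hτC')⟩

/-- T2, one big side, a B-witness and an E-witness. -/
lemma caseJ1BE (h3 : KConnected 3 G) (hsep₀ : IsSeparation G Y₀ S₀ Z₀)
    (hY : Y₀.Nonempty) (hZ : Z₀.Nonempty) (hord : S₀.ncard = 3)
    (hconn : (G.induce Z₀).Connected) (hsplit : ¬ ∃ z : V, SplitVertex G S₀ Z₀ z)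
    {Z1 Y2 S2 Z2 Z3 : Set V}
    (hsep2 : IsSeparation G Y2 S2 Z2) (hS24 : S2.ncard < 4)
    (hP1 : Z₀ ⊆ Z1) (hWB2 : WitB G S₀ Z₀ Z2)
    (hE3c : ∀ u ∈ Y₀, ∀ v ∈ Y₀, ReachIn G Y₀ u v) (hE3 : 2 ≤ (S₀ ∩ Z3).ncard)
    (hx2 : ∃ x₂, x₂ ∈ S₀ ∧ x₂ ∈ Z2)
    (hNCV : ∀ x, x ∈ Z1 → x ∈ Z2 → x ∈ Z3 → False)
    (hNCE : ∀ u v, G.Adj u v → (u ∈ Z1 ∨ v ∈ Z1) → (u ∈ Z2 ∨ v ∈ Z2) →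
      (u ∈ Z3 ∨ v ∈ Z3) → False) : False := by
  obtain ⟨B, hB, hBZ2⟩ := hWB2
  obtain ⟨hBY0, hBN⟩ := Y0_comp_nbhd h3 hsep₀ hZ hord hB
  -- Y₀ ⊆ B hence Y₀ ⊆ Z2
  have hY0B : Y₀ ⊆ B := by
    obtain ⟨b, hb⟩ := hB.nonempty
    refine hB.subset_of_reachIn ?_ hb (fun v hv => hE3c b (hBY0 hb) v hv)
    intro y hy
    rw [compl_SZ hsep₀]
    exact hy
  have hY0Z2 : Y₀ ⊆ Z2 := fun y hy => hBZ2 (hY0B hy)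
  -- rule A : no vertex of S₀ in Z2 ∩ Z3
  have ruleA : ∀ a ∈ S₀, a ∈ Z2 → a ∈ Z3 → False := by
    intro a ha h2 h3'
    obtain ⟨z, hzZ0, hadj⟩ := S0_adj_Z0 h3 hsep₀ hY hZ hord ha
    exact hNCE a z hadj (Or.inr (hP1 hzZ0)) (Or.inl h2) (Or.inl h3')
  -- rule B : no vertex of S₀ in Z1 ∩ Z3
  have ruleB : ∀ a ∈ S₀, a ∈ Z1 → a ∈ Z3 → False := by
    intro a ha h1 h3'
    obtain ⟨y, hyY0, hadj⟩ := S0_adj_Y0 h3 hsep₀ hY hZ hord ha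
    exact hNCE a y hadj (Or.inl h1) (Or.inr (hY0Z2 hyY0)) (Or.inl h3')
  -- q, r distinct in S₀ ∩ Z3
  obtain ⟨q, hq, r, hr, hqr⟩ := two_mem_of_one_lt_ncard hE3
  have hq3 : q ∈ Z3 := hq.2
  have hqS0 : q ∈ S₀ := hq.1
  have hq1 : q ∉ Z1 := fun h => ruleB q hqS0 h hq3
  have hq2 : q ∉ Z2 := fun h => ruleA q hqS0 h hq3
  have hr1 : r ∉ Z1 := fun h => ruleB r hr.1 h hr.2
  have hr2 : r ∉ Z2 := fun h => ruleA r hr.1 h hr.2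
  -- q, r ∈ S2
  obtain ⟨yq, hyqY0, hadjq⟩ := S0_adj_Y0 h3 hsep₀ hY hZ hord hqS0
  have hqS2 : q ∈ S2 := hsep2.mem_S_of_adj (hY0Z2 hyqY0) hadjq hq2
  obtain ⟨yr, hyrY0, hadjr⟩ := S0_adj_Y0 h3 hsep₀ hY hZ hord hr.1
  have hrS2 : r ∈ S2 := hsep2.mem_S_of_adj (hY0Z2 hyrY0) hadjr hr2
  -- p := x₂ is not needed explicitly; we use q to find adjacency below
  obtain ⟨σ, hσ, τ, hτ, hστ⟩ := sigma_pair h3 hsep₀ hZ hord hconn hsplit S2 (by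
    intro z hz C hC hCZ0 hzC hCN
    by_contra hno
    push_neg at hno
    obtain ⟨p, hpS0, hpZ2⟩ := hx2
    have hpN : p ∈ Nbhd G C := hCN ▸ Or.inl hpS0
    obtain ⟨hpC, d, hdC, hadjd⟩ := hpN
    have hCZ2 : C ⊆ Z2 := hsep2.subset_Z_of_adj hC.connIn hno hdC hpZ2 hadjd
    have hqN : q ∈ Nbhd G C := hCN ▸ Or.inl hqS0
    obtain ⟨_, d', hd'C, hadj'⟩ := hqN
    exact hNCE q d' hadj'.symm (Or.inr (hP1 (hCZ0 hd'C))) (Or.inr (hCZ2 hd'C))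
      (Or.inl hq3))
  exact absurd hS24 (by
    push_neg
    exact four_le_ncard hqS2 hrS2 hσ.1 hτ.1 hqr
      (fun h => hsep₀.not_mem_S_of_mem_Z hσ.2 (h ▸ hqS0))
      (fun h => hsep₀.not_mem_S_of_mem_Z hτ.2 (h ▸ hqS0))
      (fun h => hsep₀.not_mem_S_of_mem_Z hσ.2 (h ▸ hr.1))
      (fun h => hsep₀.not_mem_S_of_mem_Z hτ.2 (h ▸ hr.1))
      hστ)

/-- T2, one big side and two B-witnesses. -/
lemma caseJ1BB (h3 : KConnected 3 G) (hsep₀ : IsSeparation G Y₀ S₀ Z₀)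
    (hY : Y₀.Nonempty) (hZ : Z₀.Nonempty) (hord : S₀.ncard = 3)
    (hconn : (G.induce Z₀).Connected) (hsplit : ¬ ∃ z : V, SplitVertex G S₀ Z₀ z)
    {Z1 Y2 S2 Z2 Y3 S3 Z3 : Set V}
    (hsep2 : IsSeparation G Y2 S2 Z2) (hS24 : S2.ncard < 4)
    (hsep3 : IsSeparation G Y3 S3 Z3) (hS34 : S3.ncard < 4)
    (hP1 : Z₀ ⊆ Z1) (hWB2 : WitB G S₀ Z₀ Z2) (hWB3 : WitB G S₀ Z₀ Z3)
    (hx2 : ∃ x₂, x₂ ∈ S₀ ∧ x₂ ∈ Z2) (hx3 : ∃ x₃, x₃ ∈ S₀ ∧ x₃ ∈ Z3)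
    (hNCE : ∀ u v, G.Adj u v → (u ∈ Z1 ∨ v ∈ Z1) → (u ∈ Z2 ∨ v ∈ Z2) →
      (u ∈ Z3 ∨ v ∈ Z3) → False) : False := by
  obtain ⟨B2, hB2, hB2Z⟩ := hWB2
  obtain ⟨hB2Y0, hB2N⟩ := Y0_comp_nbhd h3 hsep₀ hZ hord hB2
  obtain ⟨B3, hB3, hB3Z⟩ := hWB3
  obtain ⟨hB3Y0, hB3N⟩ := Y0_comp_nbhd h3 hsep₀ hZ hord hB3
  have adjB2 : ∀ a ∈ S₀, ∃ d ∈ B2, G.Adj d a := by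
    intro a ha
    have : a ∈ Nbhd G B2 := hB2N ▸ ha
    exact ⟨this.2.choose, this.2.choose_spec.1, this.2.choose_spec.2⟩
  have adjB3 : ∀ a ∈ S₀, ∃ d ∈ B3, G.Adj d a := by
    intro a ha
    have : a ∈ Nbhd G B3 := hB3N ▸ ha
    exact ⟨this.2.choose, this.2.choose_spec.1, this.2.choose_spec.2⟩
  have ruleA : ∀ a ∈ S₀, a ∈ Z2 → a ∈ Z3 → False := by
    intro a ha h2 h3'
    obtain ⟨z, hzZ0, hadj⟩ := S0_adj_Z0 h3 hsep₀ hY hZ hord ha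
    exact hNCE a z hadj (Or.inr (hP1 hzZ0)) (Or.inl h2) (Or.inl h3')
  have rule12 : ∀ a ∈ S₀, a ∈ Z1 → a ∈ Z2 → False := by
    intro a ha h1 h2
    obtain ⟨d, hdB3, hadj⟩ := adjB3 a ha
    exact hNCE a d hadj.symm (Or.inl h1) (Or.inl h2) (Or.inr (hB3Z hdB3))
  have rule13 : ∀ a ∈ S₀, a ∈ Z1 → a ∈ Z3 → False := by
    intro a ha h1 h3'
    obtain ⟨d, hdB2, hadj⟩ := adjB2 a ha
    exact hNCE a d hadj.symm (Or.inl h1) (Or.inr (hB2Z hdB2)) (Or.inl h3')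
  obtain ⟨x₂, hx2S0, hx2Z2⟩ := hx2
  obtain ⟨x₃, hx3S0, hx3Z3⟩ := hx3
  have hx2Z3 : x₂ ∉ Z3 := fun h => ruleA x₂ hx2S0 hx2Z2 h
  have hx2Z1 : x₂ ∉ Z1 := fun h => rule12 x₂ hx2S0 h hx2Z2
  have hx3Z2 : x₃ ∉ Z2 := fun h => ruleA x₃ hx3S0 h hx3Z3
  have hx3Z1 : x₃ ∉ Z1 := fun h => rule13 x₃ hx3S0 h hx3Z3
  have hx23 : x₂ ≠ x₃ := fun h => hx3Z2 (h ▸ hx2Z2)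
  have hx2S3 : x₂ ∈ S3 := by
    obtain ⟨d, hdB3, hadj⟩ := adjB3 x₂ hx2S0
    exact hsep3.mem_S_of_adj (hB3Z hdB3) hadj.symm hx2Z3
  have hx3S2 : x₃ ∈ S2 := by
    obtain ⟨d, hdB2, hadj⟩ := adjB2 x₃ hx3S0
    exact hsep2.mem_S_of_adj (hB2Z hdB2) hadj.symm hx3Z2
  obtain ⟨σ, hσ, τ, hτ, hστ⟩ := sigma_pair h3 hsep₀ hZ hord hconn hsplit S3 (by
    intro z hz C hC hCZ0 hzC hCN
    by_contra hno
    push_neg at hno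
    have hx3N : x₃ ∈ Nbhd G C := hCN ▸ Or.inl hx3S0
    obtain ⟨_, d, hdC, hadjd⟩ := hx3N
    have hCZ3 : C ⊆ Z3 := hsep3.subset_Z_of_adj hC.connIn hno hdC hx3Z3 hadjd
    have hx2N : x₂ ∈ Nbhd G C := hCN ▸ Or.inl hx2S0
    obtain ⟨_, d', hd'C, hadj'⟩ := hx2N
    exact hNCE x₂ d' hadj'.symm (Or.inr (hP1 (hCZ0 hd'C))) (Or.inl hx2Z2)
      (Or.inr (hCZ3 hd'C)))
  obtain ⟨σ', hσ', τ', hτ', hστ'⟩ := sigma_pair h3 hsep₀ hZ hord hconn hsplit S2 (by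
    intro z hz C hC hCZ0 hzC hCN
    by_contra hno
    push_neg at hno
    have hx2N : x₂ ∈ Nbhd G C := hCN ▸ Or.inl hx2S0
    obtain ⟨_, d, hdC, hadjd⟩ := hx2N
    have hCZ2 : C ⊆ Z2 := hsep2.subset_Z_of_adj hC.connIn hno hdC hx2Z2 hadjd
    have hx3N : x₃ ∈ Nbhd G C := hCN ▸ Or.inl hx3S0
    obtain ⟨_, d', hd'C, hadj'⟩ := hx3N
    exact hNCE x₃ d' hadj'.symm (Or.inr (hP1 (hCZ0 hd'C))) (Or.inr (hCZ2 hd'C))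
      (Or.inl hx3Z3))
  obtain ⟨x₁, hx1S0, hx12, hx13⟩ := third_elem hord x₂ x₃
  have hneS0Z0 : ∀ (x : V), x ∈ S₀ → ∀ (s : V), s ∈ Z₀ → x ≠ s :=
    fun x hx s hs h => hsep₀.not_mem_S_of_mem_Z hs (h ▸ hx)
  have hx1S3 : x₁ ∉ S3 := by
    intro hmem
    exact absurd hS34 (by
      push_neg
      exact four_le_ncard hx2S3 hσ.1 hτ.1 hmem
        (hneS0Z0 x₂ hx2S0 σ hσ.2) (hneS0Z0 x₂ hx2S0 τ hτ.2) (Ne.symm hx12)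
        hστ (hneS0Z0 x₁ hx1S0 σ hσ.2).symm (hneS0Z0 x₁ hx1S0 τ hτ.2).symm)
  have hx1S2 : x₁ ∉ S2 := by
    intro hmem
    exact absurd hS24 (by
      push_neg
      exact four_le_ncard hx3S2 hσ'.1 hτ'.1 hmem
        (hneS0Z0 x₃ hx3S0 σ' hσ'.2) (hneS0Z0 x₃ hx3S0 τ' hτ'.2) (Ne.symm hx13)
        hστ' (hneS0Z0 x₁ hx1S0 σ' hσ'.2).symm (hneS0Z0 x₁ hx1S0 τ' hτ'.2).symm)
  have hx1Z2 : x₁ ∈ Z2 := by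
    obtain ⟨d, hdB2, hadj⟩ := adjB2 x₁ hx1S0
    by_contra hnot
    exact hx1S2 (hsep2.mem_S_of_adj (hB2Z hdB2) hadj.symm hnot)
  have hx1Z3 : x₁ ∈ Z3 := by
    obtain ⟨d, hdB3, hadj⟩ := adjB3 x₁ hx1S0
    by_contra hnot
    exact hx1S3 (hsep3.mem_S_of_adj (hB3Z hdB3) hadj.symm hnot)
  exact ruleA x₁ hx1S0 hx1Z2 hx1Z3

/-- T2, no big side, two C/B-witnesses and one E-witness. -/
lemma caseJ0_1E (h3 : KConnected 3 G) (hsep₀ : IsSeparation G Y₀ S₀ Z₀)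
    (hY : Y₀.Nonempty) (hZ : Z₀.Nonempty) (hord : S₀.ncard = 3)
    (hconn : (G.induce Z₀).Connected) (hsplit : ¬ ∃ z : V, SplitVertex G S₀ Z₀ z)
    {Y1 S1 Z1 Y2 S2 Z2 Z3 : Set V}
    (hsep1 : IsSeparation G Y1 S1 Z1) (hS14 : S1.ncard < 4)
    (hsep2 : IsSeparation G Y2 S2 Z2) (hS24 : S2.ncard < 4)
    (hW1 : WitCB G Y₀ S₀ Z₀ Z1) (hW2 : WitCB G Y₀ S₀ Z₀ Z2)
    (hE3c : ∀ u ∈ Y₀, ∀ v ∈ Y₀, ReachIn G Y₀ u v)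
    (hE3a : (S₀ \ Z3).ncard ≤ 1) (hE3b : 2 ≤ (S₀ ∩ Z3).ncard)
    (hx1 : ∃ x₁, x₁ ∈ S₀ ∧ x₁ ∈ Z1) (hx2 : ∃ x₂, x₂ ∈ S₀ ∧ x₂ ∈ Z2)
    (hNCE : ∀ u v, G.Adj u v → (u ∈ Z1 ∨ v ∈ Z1) → (u ∈ Z2 ∨ v ∈ Z2) →
      (u ∈ Z3 ∨ v ∈ Z3) → False) : False := by
  obtain ⟨D1, hD1conn, hD1Z, hD1S0, hD1adj, _⟩ := hW1
  obtain ⟨D2, hD2conn, hD2Z, hD2S0, hD2adj, _⟩ := hW2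
  have ruleA : ∀ a ∈ S₀, a ∈ Z1 → a ∈ Z3 → False := by
    intro a ha h1 h3'
    obtain ⟨_, d, hdD, hadj⟩ := hD2adj a ha
    exact hNCE a d hadj.symm (Or.inl h1) (Or.inr (hD2Z hdD)) (Or.inl h3')
  have ruleB : ∀ a ∈ S₀, a ∈ Z2 → a ∈ Z3 → False := by
    intro a ha h2 h3'
    obtain ⟨_, d, hdD, hadj⟩ := hD1adj a ha
    exact hNCE a d hadj.symm (Or.inr (hD1Z hdD)) (Or.inl h2) (Or.inl h3')
  obtain ⟨q, hq, r, hr, hqr⟩ := two_mem_of_one_lt_ncard hE3b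
  have hq1 : q ∉ Z1 := fun h => ruleA q hq.1 h hq.2
  have hq2 : q ∉ Z2 := fun h => ruleB q hq.1 h hq.2
  have hr1 : r ∉ Z1 := fun h => ruleA r hr.1 h hr.2
  have hr2 : r ∉ Z2 := fun h => ruleB r hr.1 h hr.2
  obtain ⟨x₁, hx1S0, hx1Z1⟩ := hx1
  obtain ⟨x₂, hx2S0, hx2Z2⟩ := hx2
  have hx1Z3 : x₁ ∉ Z3 := fun h => ruleA x₁ hx1S0 hx1Z1 h
  have hx2Z3 : x₂ ∉ Z3 := fun h => ruleB x₂ hx2S0 hx2Z2 h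
  have hpeq : x₁ = x₂ := eq_of_ncard_le_one hE3a ⟨hx1S0, hx1Z3⟩ ⟨hx2S0, hx2Z3⟩
  set p := x₁ with hp
  have hpZ1 : p ∈ Z1 := hx1Z1
  have hpZ2 : p ∈ Z2 := hpeq ▸ hx2Z2
  have hpS0 : p ∈ S₀ := hx1S0
  have hqS1 : q ∈ S1 := by
    obtain ⟨_, d, hdD, hadj⟩ := hD1adj q hq.1
    exact hsep1.mem_S_of_adj (hD1Z hdD) hadj.symm hq1
  have hrS1 : r ∈ S1 := by
    obtain ⟨_, d, hdD, hadj⟩ := hD1adj r hr.1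
    exact hsep1.mem_S_of_adj (hD1Z hdD) hadj.symm hr1
  have hqS2 : q ∈ S2 := by
    obtain ⟨_, d, hdD, hadj⟩ := hD2adj q hq.1
    exact hsep2.mem_S_of_adj (hD2Z hdD) hadj.symm hq2
  have hrS2 : r ∈ S2 := by
    obtain ⟨_, d, hdD, hadj⟩ := hD2adj r hr.1
    exact hsep2.mem_S_of_adj (hD2Z hdD) hadj.symm hr2
  have hzclaim : ∀ z ∈ Z₀, ∀ C, IsCompOutside G (S₀ ∪ {z}) C → C ⊆ Z₀ → z ∉ C →
      Nbhd G C = S₀ ∪ {z} → (∃ x ∈ C, x ∈ S1) ∨ (∃ x ∈ C, x ∈ S2) := by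
    intro z hz C hC hCZ0 hzC hCN
    by_contra hno
    push_neg at hno
    obtain ⟨hno1, hno2⟩ := hno
    have hpN : p ∈ Nbhd G C := hCN ▸ Or.inl hpS0
    obtain ⟨_, d, hdC, hadjd⟩ := hpN
    have hCZ1 : C ⊆ Z1 := hsep1.subset_Z_of_adj hC.connIn hno1 hdC hpZ1 hadjd
    have hCZ2 : C ⊆ Z2 := hsep2.subset_Z_of_adj hC.connIn hno2 hdC hpZ2 hadjd
    have hqN : q ∈ Nbhd G C := hCN ▸ Or.inl hq.1
    obtain ⟨_, d', hd'C, hadj'⟩ := hqN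
    exact hNCE q d' hadj'.symm (Or.inr (hCZ1 hd'C)) (Or.inr (hCZ2 hd'C)) (Or.inl hq.2)
  have hneS0Z0 : ∀ (x : V), x ∈ S₀ → ∀ (s : V), s ∈ Z₀ → x ≠ s :=
    fun x hx s hs h => hsep₀.not_mem_S_of_mem_Z hs (h ▸ hx)
  have hneS0Y0 : ∀ (x : V), x ∈ S₀ → ∀ (s : V), s ∈ Y₀ → x ≠ s :=
    fun x hx s hs h => hsep₀.not_mem_Y_of_mem_S hx (h ▸ hs)
  have hneY0Z0 : ∀ (x : V), x ∈ Y₀ → ∀ (s : V), s ∈ Z₀ → x ≠ s :=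
    fun x hx s hs h => hsep₀.not_mem_Y_of_mem_Z hs (h ▸ hx)
  -- if `Sᵢ` meets `Y₀` then `Sᵢ ∩ Z₀ = ∅`, and the σ–τ trick on the other side
  -- yields a contradiction
  by_cases h1Y : ∃ y, y ∈ S1 ∧ y ∈ Y₀
  · obtain ⟨y₁, hy1S1, hy1Y0⟩ := h1Y
    have hS1Z0 : ∀ s ∈ S1, s ∉ Z₀ := by
      intro s hsS1 hsZ0
      exact absurd hS14 (by
        push_neg
        exact four_le_ncard hqS1 hrS1 hy1S1 hsS1 hqr
          (hneS0Y0 q hq.1 y₁ hy1Y0) (hneS0Z0 q hq.1 s hsZ0)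
          (hneS0Y0 r hr.1 y₁ hy1Y0) (hneS0Z0 r hr.1 s hsZ0)
          (hneY0Z0 y₁ hy1Y0 s hsZ0))
    obtain ⟨σ', hσ', τ', hτ', hστ'⟩ := sigma_pair h3 hsep₀ hZ hord hconn hsplit S2 (by
      intro z hz C hC hCZ0 hzC hCN
      rcases hzclaim z hz C hC hCZ0 hzC hCN with ⟨x, hxC, hxS1⟩ | h
      · exact absurd (hCZ0 hxC) (hS1Z0 x hxS1)
      · exact h)
    exact absurd hS24 (by
      push_neg
      exact four_le_ncard hqS2 hrS2 hσ'.1 hτ'.1 hqr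
        (hneS0Z0 q hq.1 σ' hσ'.2) (hneS0Z0 q hq.1 τ' hτ'.2)
        (hneS0Z0 r hr.1 σ' hσ'.2) (hneS0Z0 r hr.1 τ' hτ'.2) hστ')
  · by_cases h2Y : ∃ y, y ∈ S2 ∧ y ∈ Y₀
    · obtain ⟨y₂, hy2S2, hy2Y0⟩ := h2Y
      have hS2Z0 : ∀ s ∈ S2, s ∉ Z₀ := by
        intro s hsS2 hsZ0
        exact absurd hS24 (by
          push_neg
          exact four_le_ncard hqS2 hrS2 hy2S2 hsS2 hqr
            (hneS0Y0 q hq.1 y₂ hy2Y0) (hneS0Z0 q hq.1 s hsZ0)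
            (hneS0Y0 r hr.1 y₂ hy2Y0) (hneS0Z0 r hr.1 s hsZ0)
            (hneY0Z0 y₂ hy2Y0 s hsZ0))
      obtain ⟨σ', hσ', τ', hτ', hστ'⟩ := sigma_pair h3 hsep₀ hZ hord hconn hsplit S1 (by
        intro z hz C hC hCZ0 hzC hCN
        rcases hzclaim z hz C hC hCZ0 hzC hCN with h | ⟨x, hxC, hxS2⟩
        · exact h
        · exact absurd (hCZ0 hxC) (hS2Z0 x hxS2))
      exact absurd hS14 (by
        push_neg
        exact four_le_ncard hqS1 hrS1 hσ'.1 hτ'.1 hqr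
          (hneS0Z0 q hq.1 σ' hσ'.2) (hneS0Z0 q hq.1 τ' hτ'.2)
          (hneS0Z0 r hr.1 σ' hσ'.2) (hneS0Z0 r hr.1 τ' hτ'.2) hστ')
    · -- S1 and S2 avoid Y₀ : then Y₀ ⊆ Z1 ∩ Z2 and q gives a covering edge
      push_neg at h1Y h2Y
      have hY0S1 : ∀ x ∈ Y₀, x ∉ S1 := fun x hx hS => h1Y x hS hx
      have hY0S2 : ∀ x ∈ Y₀, x ∉ S2 := fun x hx hS => h2Y x hS hx
      obtain ⟨y, hyY0, hadjy⟩ := S0_adj_Y0 h3 hsep₀ hY hZ hord hpS0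
      have hY0Z1 : Y₀ ⊆ Z1 :=
        hsep1.subset_Z_of_adj hE3c hY0S1 hyY0 hpZ1 hadjy.symm
      have hY0Z2 : Y₀ ⊆ Z2 :=
        hsep2.subset_Z_of_adj hE3c hY0S2 hyY0 hpZ2 hadjy.symm
      obtain ⟨y', hy'Y0, hadjy'⟩ := S0_adj_Y0 h3 hsep₀ hY hZ hord hq.1
      exact hNCE q y' hadjy' (Or.inr (hY0Z1 hy'Y0)) (Or.inr (hY0Z2 hy'Y0)) (Or.inl hq.2)

/-- T2, no big side, all three witnesses of type C/B. -/
lemma caseJ0CB (h3 : KConnected 3 G) (hsep₀ : IsSeparation G Y₀ S₀ Z₀)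
    (hord : S₀.ncard = 3)
    {Y1 S1 Z1 Y2 S2 Z2 Y3 S3 Z3 : Set V}
    (hsep1 : IsSeparation G Y1 S1 Z1) (hS14 : S1.ncard < 4)
    (hsep2 : IsSeparation G Y2 S2 Z2) (hS24 : S2.ncard < 4)
    (hsep3 : IsSeparation G Y3 S3 Z3) (hS34 : S3.ncard < 4)
    (hW1 : WitCB G Y₀ S₀ Z₀ Z1) (hW2 : WitCB G Y₀ S₀ Z₀ Z2) (hW3 : WitCB G Y₀ S₀ Z₀ Z3)
    (hx1 : ∃ x, x ∈ S₀ ∧ x ∈ Z1) (hx2 : ∃ x, x ∈ S₀ ∧ x ∈ Z2)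
    (hx3 : ∃ x, x ∈ S₀ ∧ x ∈ Z3)
    (hNCE : ∀ u v, G.Adj u v → (u ∈ Z1 ∨ v ∈ Z1) → (u ∈ Z2 ∨ v ∈ Z2) →
      (u ∈ Z3 ∨ v ∈ Z3) → False) : False := by
  obtain ⟨D1, hD1conn, hD1Z, hD1S0, hD1adj, k1⟩ := hW1
  obtain ⟨D2, hD2conn, hD2Z, hD2S0, hD2adj, k2⟩ := hW2
  obtain ⟨D3, hD3conn, hD3Z, hD3S0, hD3adj, k3⟩ := hW3
  -- no vertex of S₀ lies in two of the Zᵢ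
  have r12 : ∀ a ∈ S₀, a ∈ Z1 → a ∈ Z2 → False := by
    intro a ha h1 h2
    obtain ⟨_, d, hdD, hadj⟩ := hD3adj a ha
    exact hNCE a d hadj.symm (Or.inl h1) (Or.inl h2) (Or.inr (hD3Z hdD))
  have r13 : ∀ a ∈ S₀, a ∈ Z1 → a ∈ Z3 → False := by
    intro a ha h1 h3'
    obtain ⟨_, d, hdD, hadj⟩ := hD2adj a ha
    exact hNCE a d hadj.symm (Or.inl h1) (Or.inr (hD2Z hdD)) (Or.inl h3')
  have r23 : ∀ a ∈ S₀, a ∈ Z2 → a ∈ Z3 → False := by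
    intro a ha h2 h3'
    obtain ⟨_, d, hdD, hadj⟩ := hD1adj a ha
    exact hNCE a d hadj.symm (Or.inr (hD1Z hdD)) (Or.inl h2) (Or.inl h3')
  obtain ⟨x₁, hx1S0, hx1Z⟩ := hx1
  obtain ⟨x₂, hx2S0, hx2Z⟩ := hx2
  obtain ⟨x₃, hx3S0, hx3Z⟩ := hx3
  -- |S₀ ∩ Zᵢ| = 1
  have hd12 : Disjoint (S₀ ∩ Z1) (S₀ ∩ Z2) := by
    rw [Set.disjoint_left]
    rintro a ⟨ha, h1⟩ ⟨_, h2⟩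
    exact r12 a ha h1 h2
  have hd13 : Disjoint (S₀ ∩ Z1) (S₀ ∩ Z3) := by
    rw [Set.disjoint_left]
    rintro a ⟨ha, h1⟩ ⟨_, h2⟩
    exact r13 a ha h1 h2
  have hd23 : Disjoint (S₀ ∩ Z2) (S₀ ∩ Z3) := by
    rw [Set.disjoint_left]
    rintro a ⟨ha, h1⟩ ⟨_, h2⟩
    exact r23 a ha h1 h2
  have hsum : (S₀ ∩ Z1).ncard + (S₀ ∩ Z2).ncard + (S₀ ∩ Z3).ncard ≤ 3 := by
    have hd : Disjoint ((S₀ ∩ Z1) ∪ (S₀ ∩ Z2)) (S₀ ∩ Z3) :=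
      Set.disjoint_union_left.mpr ⟨hd13, hd23⟩
    have e1 : ((S₀ ∩ Z1) ∪ (S₀ ∩ Z2) ∪ (S₀ ∩ Z3)).ncard
        = (S₀ ∩ Z1).ncard + (S₀ ∩ Z2).ncard + (S₀ ∩ Z3).ncard := by
      rw [Set.ncard_union_eq hd (Set.toFinite _) (Set.toFinite _),
        Set.ncard_union_eq hd12 (Set.toFinite _) (Set.toFinite _)]
    have e2 : ((S₀ ∩ Z1) ∪ (S₀ ∩ Z2) ∪ (S₀ ∩ Z3)).ncard ≤ 3 := by
      rw [← hord]
      exact Set.ncard_le_ncard (by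
        rintro x ((h | h) | h) <;> exact h.1) (Set.toFinite _)
    omega
  have hn1 : 1 ≤ (S₀ ∩ Z1).ncard := by
    have : ({x₁} : Set V) ⊆ S₀ ∩ Z1 := by rintro _ rfl; exact ⟨hx1S0, hx1Z⟩
    have := Set.ncard_le_ncard this (Set.toFinite _)
    simpa using this
  have hn2 : 1 ≤ (S₀ ∩ Z2).ncard := by
    have : ({x₂} : Set V) ⊆ S₀ ∩ Z2 := by rintro _ rfl; exact ⟨hx2S0, hx2Z⟩
    have := Set.ncard_le_ncard this (Set.toFinite _)
    simpa using this
  have hn3 : 1 ≤ (S₀ ∩ Z3).ncard := by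
    have : ({x₃} : Set V) ⊆ S₀ ∩ Z3 := by rintro _ rfl; exact ⟨hx3S0, hx3Z⟩
    have := Set.ncard_le_ncard this (Set.toFinite _)
    simpa using this
  have huniq1 : ∀ a ∈ S₀, a ∈ Z1 → a = x₁ := by
    intro a ha hmem
    exact eq_of_ncard_le_one (A := S₀ ∩ Z1) (by omega) ⟨ha, hmem⟩ ⟨hx1S0, hx1Z⟩
  have huniq2 : ∀ a ∈ S₀, a ∈ Z2 → a = x₂ := by
    intro a ha hmem
    exact eq_of_ncard_le_one (A := S₀ ∩ Z2) (by omega) ⟨ha, hmem⟩ ⟨hx2S0, hx2Z⟩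
  have huniq3 : ∀ a ∈ S₀, a ∈ Z3 → a = x₃ := by
    intro a ha hmem
    exact eq_of_ncard_le_one (A := S₀ ∩ Z3) (by omega) ⟨ha, hmem⟩ ⟨hx3S0, hx3Z⟩
  -- S₀ \ {xᵢ} ⊆ Sᵢ
  have hsubS1 : ∀ a ∈ S₀, a ≠ x₁ → a ∈ S1 := by
    intro a ha hne
    obtain ⟨_, d, hdD, hadj⟩ := hD1adj a ha
    exact hsep1.mem_S_of_adj (hD1Z hdD) hadj.symm (fun h => hne (huniq1 a ha h))
  have hsubS2 : ∀ a ∈ S₀, a ≠ x₂ → a ∈ S2 := by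
    intro a ha hne
    obtain ⟨_, d, hdD, hadj⟩ := hD2adj a ha
    exact hsep2.mem_S_of_adj (hD2Z hdD) hadj.symm (fun h => hne (huniq2 a ha h))
  have hsubS3 : ∀ a ∈ S₀, a ≠ x₃ → a ∈ S3 := by
    intro a ha hne
    obtain ⟨_, d, hdD, hadj⟩ := hD3adj a ha
    exact hsep3.mem_S_of_adj (hD3Z hdD) hadj.symm (fun h => hne (huniq3 a ha h))
  -- |Sᵢ \ S₀| ≤ 1
  have hSd1 : (S1 \ S₀).ncard ≤ 1 := by
    have h1 : (S1 ∩ S₀).ncard + (S1 \ S₀).ncard = S1.ncard :=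
      Set.ncard_inter_add_ncard_diff_eq_ncard S1 S₀ (Set.toFinite _)
    have h2 : 2 ≤ (S1 ∩ S₀).ncard := by
      have hsub : S₀ \ {x₁} ⊆ S1 ∩ S₀ := by
        rintro a ⟨ha, hne⟩
        exact ⟨hsubS1 a ha (by simpa using hne), ha⟩
      have h3' : (S₀ \ {x₁}).ncard = 2 := by
        have hx1' : x₁ ∈ S₀ := hx1S0
        rw [Set.ncard_diff_singleton_of_mem hx1', hord]
      have := Set.ncard_le_ncard hsub (Set.toFinite _)
      omega
    omega
  have hSd2 : (S2 \ S₀).ncard ≤ 1 := by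
    have h1 : (S2 ∩ S₀).ncard + (S2 \ S₀).ncard = S2.ncard :=
      Set.ncard_inter_add_ncard_diff_eq_ncard S2 S₀ (Set.toFinite _)
    have h2 : 2 ≤ (S2 ∩ S₀).ncard := by
      have hsub : S₀ \ {x₂} ⊆ S2 ∩ S₀ := by
        rintro a ⟨ha, hne⟩
        exact ⟨hsubS2 a ha (by simpa using hne), ha⟩
      have h3' : (S₀ \ {x₂}).ncard = 2 := by
        rw [Set.ncard_diff_singleton_of_mem hx2S0, hord]
      have := Set.ncard_le_ncard hsub (Set.toFinite _)
      omega
    omega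
  have hSd3 : (S3 \ S₀).ncard ≤ 1 := by
    have h1 : (S3 ∩ S₀).ncard + (S3 \ S₀).ncard = S3.ncard :=
      Set.ncard_inter_add_ncard_diff_eq_ncard S3 S₀ (Set.toFinite _)
    have h2 : 2 ≤ (S3 ∩ S₀).ncard := by
      have hsub : S₀ \ {x₃} ⊆ S3 ∩ S₀ := by
        rintro a ⟨ha, hne⟩
        exact ⟨hsubS3 a ha (by simpa using hne), ha⟩
      have h3' : (S₀ \ {x₃}).ncard = 2 := by
        rw [Set.ncard_diff_singleton_of_mem hx3S0, hord]
      have := Set.ncard_le_ncard hsub (Set.toFinite _)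
      omega
    omega
  -- Dⱼ meets Sᵢ for i ≠ j
  have gen : ∀ {Za Zb Zc Ya Sa : Set V} {xa xc : V} {Dj : Set V},
      IsSeparation G Ya Sa Za →
      (∀ u ∈ Dj, ∀ v ∈ Dj, ReachIn G Dj u v) → Dj ⊆ Zb → (∀ x ∈ Dj, x ∉ Sa) →
      (∀ a ∈ S₀, a ∉ Dj ∧ ∃ d ∈ Dj, G.Adj d a) → xa ∈ S₀ → xa ∈ Za → xc ∈ S₀ → xc ∈ Zc →
      (∀ u v, G.Adj u v → (u ∈ Za ∨ v ∈ Za) → (u ∈ Zb ∨ v ∈ Zb) → (u ∈ Zc ∨ v ∈ Zc) →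
        False) → False := by
    intro Za Zb Zc Ya Sa xa xc Dj hsepa hconnj hjb hnoSa hadjj hxaS0 hxaZa hxcS0 hxcZc hE
    obtain ⟨_, d, hdD, hadj⟩ := hadjj xa hxaS0
    have hja : Dj ⊆ Za := hsepa.subset_Z_of_adj hconnj hnoSa hdD hxaZa hadj
    obtain ⟨_, d', hd'D, hadj'⟩ := hadjj xc hxcS0
    exact hE xc d' hadj'.symm (Or.inr (hja hd'D)) (Or.inr (hjb hd'D)) (Or.inl hxcZc)
  have hmeet : ∀ {Za Zb Zc Ya Sa : Set V} {xa xc : V} {Dj : Set V},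
      IsSeparation G Ya Sa Za →
      (∀ u ∈ Dj, ∀ v ∈ Dj, ReachIn G Dj u v) → Dj ⊆ Zb →
      (∀ a ∈ S₀, a ∉ Dj ∧ ∃ d ∈ Dj, G.Adj d a) → xa ∈ S₀ → xa ∈ Za → xc ∈ S₀ → xc ∈ Zc →
      (∀ u v, G.Adj u v → (u ∈ Za ∨ v ∈ Za) → (u ∈ Zb ∨ v ∈ Zb) → (u ∈ Zc ∨ v ∈ Zc) →
        False) → ∃ s ∈ Dj, s ∈ Sa := by
    intro Za Zb Zc Ya Sa xa xc Dj hsepa hconnj hjb hadjj hxaS0 hxaZa hxcS0 hxcZc hE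
    by_contra hno
    push_neg at hno
    exact gen hsepa hconnj hjb hno hadjj hxaS0 hxaZa hxcS0 hxcZc hE
  -- the common vertices tᵢ ∈ Dⱼ ∩ Dₖ
  obtain ⟨s21, hs21D, hs21S⟩ := hmeet hsep1 hD2conn hD2Z hD2adj hx1S0 hx1Z hx3S0 hx3Z hNCE
  obtain ⟨s31, hs31D, hs31S⟩ := hmeet hsep1 hD3conn hD3Z hD3adj hx1S0 hx1Z hx2S0 hx2Z
    (fun u v h a b c => hNCE u v h a c b)
  obtain ⟨s12, hs12D, hs12S⟩ := hmeet hsep2 hD1conn hD1Z hD1adj hx2S0 hx2Z hx3S0 hx3Z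
    (fun u v h a b c => hNCE u v h b a c)
  obtain ⟨s32, hs32D, hs32S⟩ := hmeet hsep2 hD3conn hD3Z hD3adj hx2S0 hx2Z hx1S0 hx1Z
    (fun u v h a b c => hNCE u v h c a b)
  obtain ⟨s13, hs13D, hs13S⟩ := hmeet hsep3 hD1conn hD1Z hD1adj hx3S0 hx3Z hx2S0 hx2Z
    (fun u v h a b c => hNCE u v h b c a)
  obtain ⟨s23, hs23D, hs23S⟩ := hmeet hsep3 hD2conn hD2Z hD2adj hx3S0 hx3Z hx1S0 hx1Z
    (fun u v h a b c => hNCE u v h c b a)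
  -- t₁ ∈ D2 ∩ D3
  have ht1 : s21 = s31 :=
    eq_of_ncard_le_one (A := S1 \ S₀) hSd1 ⟨hs21S, hD2S0 _ hs21D⟩ ⟨hs31S, hD3S0 _ hs31D⟩
  have ht2 : s12 = s32 :=
    eq_of_ncard_le_one (A := S2 \ S₀) hSd2 ⟨hs12S, hD1S0 _ hs12D⟩ ⟨hs32S, hD3S0 _ hs32D⟩
  have ht3 : s13 = s23 :=
    eq_of_ncard_le_one (A := S3 \ S₀) hSd3 ⟨hs13S, hD1S0 _ hs13D⟩ ⟨hs23S, hD2S0 _ hs23D⟩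
  have ht1D2 : s21 ∈ D2 := hs21D
  have ht1D3 : s21 ∈ D3 := ht1 ▸ hs31D
  have ht2D1 : s12 ∈ D1 := hs12D
  have ht2D3 : s12 ∈ D3 := ht2 ▸ hs32D
  have ht3D1 : s13 ∈ D1 := hs13D
  have ht3D2 : s13 ∈ D2 := ht3 ▸ hs23D
  -- mixed kinds are impossible
  have mixed : ∀ {Da Db : Set V} {t : V}, Da ⊆ Z₀ → Db ⊆ Y₀ → t ∈ Da → t ∈ Db → False :=
    fun hZa hYb ht ht' => hsep₀.not_mem_Y_of_mem_Z (hZa ht) (hYb ht')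
  rcases k1 with c1 | b1 <;> rcases k2 with c2 | b2 <;> rcases k3 with c3 | b3
  · -- C C C
    obtain ⟨e1, he1Z0, hcomp1, hD1Z0, he1D1, hN1⟩ := c1
    obtain ⟨e2, he2Z0, hcomp2, hD2Z0, he2D2, hN2⟩ := c2
    obtain ⟨e3, he3Z0, hcomp3, hD3Z0, he3D3, hN3⟩ := c3
    have notsub12 : ¬ D1 ⊆ D2 := by
      intro hsub
      obtain ⟨_, d, hdD1, hadj⟩ := hD1adj x₃ hx3S0
      exact hNCE x₃ d hadj.symm (Or.inr (hD1Z hdD1)) (Or.inr (hD2Z (hsub hdD1)))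
        (Or.inl hx3Z)
    have notsub32 : ¬ D3 ⊆ D2 := by
      intro hsub
      obtain ⟨_, d, hdD3, hadj⟩ := hD3adj x₁ hx1S0
      exact hNCE x₁ d hadj.symm (Or.inl hx1Z) (Or.inr (hD2Z (hsub hdD3)))
        (Or.inr (hD3Z hdD3))
    have he2D1 : e2 ∈ D1 := by
      by_contra h
      refine notsub12 (hcomp2.subset_of_reachIn ?_ ht3D2 (fun v hv => hD1conn s13 ht3D1 v hv))
      intro x hx
      rintro (hmem | hmem)
      · exact hsep₀.not_mem_S_of_mem_Z (hD1Z0 hx) hmem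
      · rw [Set.mem_singleton_iff] at hmem
        exact h (hmem ▸ hx)
    have he2D3 : e2 ∈ D3 := by
      by_contra h
      refine notsub32 (hcomp2.subset_of_reachIn ?_ ht1D2 (fun v hv => hD3conn s21 ht1D3 v hv))
      intro x hx
      rintro (hmem | hmem)
      · exact hsep₀.not_mem_S_of_mem_Z (hD3Z0 hx) hmem
      · rw [Set.mem_singleton_iff] at hmem
        exact h (hmem ▸ hx)
    have he2N : e2 ∈ Nbhd G D2 := hN2 ▸ Or.inr rfl
    obtain ⟨_, d, hdD2, hadj⟩ := he2N
    exact hNCE e2 d hadj.symm (Or.inl (hD1Z he2D1)) (Or.inr (hD2Z hdD2))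
      (Or.inl (hD3Z he2D3))
  · -- C C B
    exact mixed c1.choose_spec.2.2.1 b3.2.1 ht2D1 ht2D3
  · -- C B C
    exact mixed c1.choose_spec.2.2.1 b2.2.1 ht3D1 ht3D2
  · -- C B B
    exact mixed c1.choose_spec.2.2.1 b2.2.1 ht3D1 ht3D2
  · -- B C C
    exact mixed c2.choose_spec.2.2.1 b1.2.1 ht3D2 ht3D1
  · -- B C B
    exact mixed c2.choose_spec.2.2.1 b1.2.1 ht3D2 ht3D1
  · -- B B C
    exact mixed c3.choose_spec.2.2.1 b1.2.1 ht2D3 ht2D1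
  · -- B B B
    have heq : D1 = D2 := b1.1.eq_of_mem b2.1 ht3D1 ht3D2
    obtain ⟨_, d, hdD1, hadj⟩ := hD1adj x₃ hx3S0
    exact hNCE x₃ d hadj.symm (Or.inr (hD1Z hdD1)) (Or.inr (hD2Z (heq ▸ hdD1)))
      (Or.inl hx3Z)

/-- T2, exactly one big side (master over witness types of the other two). -/
lemma masterJ1 (h3 : KConnected 3 G) (hsep₀ : IsSeparation G Y₀ S₀ Z₀)
    (hY : Y₀.Nonempty) (hZ : Z₀.Nonempty) (hord : S₀.ncard = 3)
    (hconn : (G.induce Z₀).Connected) (hsplit : ¬ ∃ z : V, SplitVertex G S₀ Z₀ z)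
    {Z1 Y2 S2 Z2 Y3 S3 Z3 : Set V}
    (hsep2 : IsSeparation G Y2 S2 Z2) (hS24 : S2.ncard < 4)
    (hsep3 : IsSeparation G Y3 S3 Z3) (hS34 : S3.ncard < 4)
    (hP1 : Z₀ ⊆ Z1)
    (hW2 : WitC G S₀ Z₀ Z2 ∨ WitB G S₀ Z₀ Z2 ∨ WitE G Y₀ S₀ Z2)
    (hW3 : WitC G S₀ Z₀ Z3 ∨ WitB G S₀ Z₀ Z3 ∨ WitE G Y₀ S₀ Z3)
    (hx2 : ∃ x, x ∈ S₀ ∧ x ∈ Z2) (hx3 : ∃ x, x ∈ S₀ ∧ x ∈ Z3)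
    (hNCV : ∀ x, x ∈ Z1 → x ∈ Z2 → x ∈ Z3 → False)
    (hNCE : ∀ u v, G.Adj u v → (u ∈ Z1 ∨ v ∈ Z1) → (u ∈ Z2 ∨ v ∈ Z2) →
      (u ∈ Z3 ∨ v ∈ Z3) → False) : False := by
  have hx3' : ∃ a, a ∈ Z3 ∧ a ∈ S₀ := hx3.imp (fun x hx => ⟨hx.2, hx.1⟩)
  have hx2' : ∃ a, a ∈ Z2 ∧ a ∈ S₀ := hx2.imp (fun x hx => ⟨hx.2, hx.1⟩)
  rcases hW2 with c2 | hW2'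
  · exact caseJ1C hP1 c2 hx3' hNCE
  rcases hW3 with c3 | hW3'
  · exact caseJ1C hP1 c3 hx2' (fun u v h a b c => hNCE u v h a c b)
  rcases hW2' with b2 | e2 <;> rcases hW3' with b3 | e3
  · exact caseJ1BB h3 hsep₀ hY hZ hord hconn hsplit hsep2 hS24 hsep3 hS34 hP1 b2 b3
      hx2 hx3 hNCE
  · exact caseJ1BE h3 hsep₀ hY hZ hord hconn hsplit hsep2 hS24 hP1 b2 e3.1 e3.2.2.2
      hx2 hNCV hNCE
  · exact caseJ1BE h3 hsep₀ hY hZ hord hconn hsplit hsep3 hS34 hP1 b3 e2.1 e2.2.2.2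
      hx3 (fun x a b c => hNCV x a c b) (fun u v h a b c => hNCE u v h a c b)
  · exact caseJ1EE h3 hsep₀ hY hZ hord hP1 e2.2.2.2 e3.2.2.2 hNCV hNCE

/-- The full T2 verification. -/
lemma tangle_T2 (h3 : KConnected 3 G) (hsep₀ : IsSeparation G Y₀ S₀ Z₀)
    (hY : Y₀.Nonempty) (hZ : Z₀.Nonempty) (hord : S₀.ncard = 3)
    (hnd : ¬ Degenerate G Y₀ S₀ Z₀)
    (hconn : (G.induce Z₀).Connected) (hsplit : ¬ ∃ z : V, SplitVertex G S₀ Z₀ z)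
    {Y1 S1 Z1 Y2 S2 Z2 Y3 S3 Z3 : Set V}
    (hsep1 : IsSeparation G Y1 S1 Z1) (hS14 : S1.ncard < 4)
    (hT1m : Z₀ ⊆ Z1 ∨ (Y1 ∩ S₀).ncard < (Z1 ∩ S₀).ncard)
    (hsep2 : IsSeparation G Y2 S2 Z2) (hS24 : S2.ncard < 4)
    (hT2m : Z₀ ⊆ Z2 ∨ (Y2 ∩ S₀).ncard < (Z2 ∩ S₀).ncard)
    (hsep3 : IsSeparation G Y3 S3 Z3) (hS34 : S3.ncard < 4)
    (hT3m : Z₀ ⊆ Z3 ∨ (Y3 ∩ S₀).ncard < (Z3 ∩ S₀).ncard)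
    (hNCV : ∀ x, x ∈ Z1 → x ∈ Z2 → x ∈ Z3 → False)
    (hNCE : ∀ u v, G.Adj u v → (u ∈ Z1 ∨ v ∈ Z1) → (u ∈ Z2 ∨ v ∈ Z2) →
      (u ∈ Z3 ∨ v ∈ Z3) → False) : False := by
  have hget : ∀ {Ya Sa Za : Set V}, IsSeparation G Ya Sa Za →
      (Ya ∩ S₀).ncard < (Za ∩ S₀).ncard → ∃ x, x ∈ S₀ ∧ x ∈ Za := by
    intro Ya Sa Za _ hmaj
    have : (Za ∩ S₀).Nonempty := (Za ∩ S₀).nonempty_of_ncard_ne_zero (by omega)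
    exact this.imp (fun x hx => ⟨hx.2, hx.1⟩)
  by_cases hP1 : Z₀ ⊆ Z1
  · by_cases hP2 : Z₀ ⊆ Z2
    · exact caseJ2 h3 hsep₀ hY hZ hord hP1 hP2 hsep3 hT3m hNCV hNCE
    · by_cases hP3 : Z₀ ⊆ Z3
      · exact caseJ2 h3 hsep₀ hY hZ hord hP1 hP3 hsep2 hT2m
          (fun x a b c => hNCV x a c b) (fun u v h a b c => hNCE u v h a c b)
      · have hm2 := hT2m.resolve_left hP2
        have hm3 := hT3m.resolve_left hP3
        exact masterJ1 h3 hsep₀ hY hZ hord hconn hsplit hsep2 hS24 hsep3 hS34 hP1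
          (witness_lemma h3 hsep₀ hY hZ hord hconn hsplit hsep2 hS24 hm2)
          (witness_lemma h3 hsep₀ hY hZ hord hconn hsplit hsep3 hS34 hm3)
          (hget hsep2 hm2) (hget hsep3 hm3) hNCV hNCE
  · by_cases hP2 : Z₀ ⊆ Z2
    · by_cases hP3 : Z₀ ⊆ Z3
      · exact caseJ2 h3 hsep₀ hY hZ hord hP2 hP3 hsep1 hT1m
          (fun x a b c => hNCV x c a b) (fun u v h a b c => hNCE u v h c a b)
      · have hm1 := hT1m.resolve_left hP1
        have hm3 := hT3m.resolve_left hP3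
        exact masterJ1 h3 hsep₀ hY hZ hord hconn hsplit hsep1 hS14 hsep3 hS34 hP2
          (witness_lemma h3 hsep₀ hY hZ hord hconn hsplit hsep1 hS14 hm1)
          (witness_lemma h3 hsep₀ hY hZ hord hconn hsplit hsep3 hS34 hm3)
          (hget hsep1 hm1) (hget hsep3 hm3)
          (fun x a b c => hNCV x b a c) (fun u v h a b c => hNCE u v h b a c)
    · by_cases hP3 : Z₀ ⊆ Z3
      · have hm1 := hT1m.resolve_left hP1
        have hm2 := hT2m.resolve_left hP2
        exact masterJ1 h3 hsep₀ hY hZ hord hconn hsplit hsep1 hS14 hsep2 hS24 hP3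
          (witness_lemma h3 hsep₀ hY hZ hord hconn hsplit hsep1 hS14 hm1)
          (witness_lemma h3 hsep₀ hY hZ hord hconn hsplit hsep2 hS24 hm2)
          (hget hsep1 hm1) (hget hsep2 hm2)
          (fun x a b c => hNCV x b c a) (fun u v h a b c => hNCE u v h b c a)
      · -- no big side
        have hm1 := hT1m.resolve_left hP1
        have hm2 := hT2m.resolve_left hP2
        have hm3 := hT3m.resolve_left hP3
        have hx1 := hget hsep1 hm1
        have hx2 := hget hsep2 hm2
        have hx3 := hget hsep3 hm3
        have hW1 := witness_lemma h3 hsep₀ hY hZ hord hconn hsplit hsep1 hS14 hm1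
        have hW2 := witness_lemma h3 hsep₀ hY hZ hord hconn hsplit hsep2 hS24 hm2
        have hW3 := witness_lemma h3 hsep₀ hY hZ hord hconn hsplit hsep3 hS34 hm3
        have conv : ∀ {Za : Set V}, WitC G S₀ Z₀ Za ∨ WitB G S₀ Z₀ Za →
            WitCB G Y₀ S₀ Z₀ Za := by
          rintro Za (hc | hb)
          · exact witC_to_CB hsep₀ hc
          · exact witB_to_CB h3 hsep₀ hZ hord hb
        have recomb : ∀ {Za : Set V}, (WitC G S₀ Z₀ Za ∨ WitB G S₀ Z₀ Za ∨ WitE G Y₀ S₀ Za) →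
            WitCB G Y₀ S₀ Z₀ Za ∨ WitE G Y₀ S₀ Za := by
          rintro Za (hc | hb | he)
          · exact Or.inl (conv (Or.inl hc))
          · exact Or.inl (conv (Or.inr hb))
          · exact Or.inr he
        rcases recomb hW1 with w1 | e1 <;> rcases recomb hW2 with w2 | e2 <;>
          rcases recomb hW3 with w3 | e3
        · exact caseJ0CB h3 hsep₀ hord hsep1 hS14 hsep2 hS24 hsep3 hS34 w1 w2 w3
            hx1 hx2 hx3 hNCE
        · exact caseJ0_1E h3 hsep₀ hY hZ hord hconn hsplit hsep1 hS14 hsep2 hS24 w1 w2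
            e3.1 e3.2.2.1 e3.2.2.2 hx1 hx2 hNCE
        · exact caseJ0_1E h3 hsep₀ hY hZ hord hconn hsplit hsep1 hS14 hsep3 hS34 w1 w3
            e2.1 e2.2.2.1 e2.2.2.2 hx1 hx3 (fun u v h a b c => hNCE u v h a c b)
        · exact caseJ0_2E hord w1 e2.2.2.2 e3.2.2.2 hNCV hNCE
        · exact caseJ0_1E h3 hsep₀ hY hZ hord hconn hsplit hsep2 hS24 hsep3 hS34 w2 w3
            e1.1 e1.2.2.1 e1.2.2.2 hx2 hx3 (fun u v h a b c => hNCE u v h c a b)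
        · exact caseJ0_2E hord w2 e1.2.2.2 e3.2.2.2
            (fun x a b c => hNCV x b a c) (fun u v h a b c => hNCE u v h b a c)
        · exact caseJ0_2E hord w3 e1.2.2.2 e2.2.2.2
            (fun x a b c => hNCV x b c a) (fun u v h a b c => hNCE u v h b c a)
        · exact caseJ0_3E hY hnd e1.1 e1.2.1 e2.2.1 e3.2.1 e1.2.2.1 e2.2.2.1 e3.2.2.1
            hNCE

end T2

/-- a proper non-degenerate separation (Y₀,S₀,Z₀) of order 3 with Z₀
connected and no split vertex defines a tangle of order 4. -/
theorem statement19 {V : Type*} [Fintype V] (G : SimpleGraph V)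
    (h3 : KConnected 3 G) (Y₀ S₀ Z₀ : Set V)
    (hsep : IsSeparation G Y₀ S₀ Z₀) (hY : Y₀.Nonempty) (hZ : Z₀.Nonempty)
    (hord : S₀.ncard = 3) (hnd : ¬ Degenerate G Y₀ S₀ Z₀)
    (hconn : (G.induce Z₀).Connected)
    (hsplit : ¬ ∃ z : V, SplitVertex G S₀ Z₀ z) :
    IsTangle G 4 {p : Set V × Set V × Set V |
      IsSeparation G p.1 p.2.1 p.2.2 ∧ p.2.1.ncard < 4 ∧
      (Z₀ ⊆ p.2.2 ∨ (p.1 ∩ S₀).ncard < (p.2.2 ∩ S₀).ncard)} := by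
  refine ⟨?_, ?_, ?_, ?_⟩
  · rintro p ⟨hs, h4, _⟩
    exact ⟨hs, h4⟩
  · intro Y S Z hs h4
    rcases tangle_T1 h3 hsep hY hZ hord hconn hsplit hs h4 with h | h
    · exact Or.inl ⟨hs, h4, h⟩
    · exact Or.inr ⟨hs.symm, h4, h⟩
  · rintro ⟨Y1, S1, Z1⟩ ⟨hs1, h14, hT1⟩ ⟨Y2, S2, Z2⟩ ⟨hs2, h24, hT2⟩
      ⟨Y3, S3, Z3⟩ ⟨hs3, h34, hT3⟩
    by_contra hcon
    push_neg at hcon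
    obtain ⟨hA, hB⟩ := hcon
    refine tangle_T2 h3 hsep hY hZ hord hnd hconn hsplit hs1 h14 hT1 hs2 h24 hT2
      hs3 h34 hT3 ?_ ?_
    · intro x a b c
      exact absurd hA (Set.nonempty_iff_ne_empty.mp ⟨x, ⟨a, b⟩, c⟩)
    · intro u v h a b c
      rcases c with c | c
      · exact (hB u v h a b).1 c
      · exact (hB u v h a b).2 c
  · rintro p ⟨hs, h4, hT⟩
    rcases hT with h | h
    · exact hZ.mono h
    · have hne : (p.2.2 ∩ S₀).Nonempty := (p.2.2 ∩ S₀).nonempty_of_ncard_ne_zero (by omega)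
      exact hne.mono Set.inter_subset_left
end
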